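/- arXiv:1709.04331 — 7 statements merged into one kernel-verified Lean document; each statement's English description precedes it below -/
import Mathlib

section
/- Let K be a field of characteristic zero containing a primitive 2^n-th root of unity ζ, with a valuation ring O ⊆ K whose maximal ideal contains 2. If l_0, …, l_{2^m−1} are integers such that the sum ∑_{i=0}^{2^m−1} ζ^{l_i} lies in 2^m·O, then either all the ζ^{l_i} are equal, or the sum ∑_{i=0}^{2^m−1} ζ^{l_i} equals 0. -/
set_option linter.unusedSectionVars false
open Polynomial Finset

namespace Stmt0Aux

variable {K : Type*} [Field K] [CharZero K] {O : ValuationSubring K}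

lemma aeval_mem {η : K} (hη : η ∈ O) (P : ℤ[X]) : (aeval η) P ∈ O := by
  rw [Polynomial.aeval_eq_sum_range]
  exact sum_mem fun i _ => zsmul_mem (pow_mem hη i) _

lemma root_mem {η : K} {t : ℕ} (ht : 0 < t) (h : η ^ t = 1) : η ∈ O := by
  rcases O.mem_or_inv_mem η with h1 | h1
  · exact h1
  · have h2 : η ^ (t - 1) * η = 1 := by
      rw [← pow_succ]
      rwa [Nat.sub_add_cancel ht]
    have h3 : η = (η⁻¹) ^ (t - 1) := by
      rw [inv_pow]
      exact eq_inv_of_mul_eq_one_right h2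
    rw [h3]
    exact pow_mem h1 _

lemma not_one_D (h2 : ¬ IsUnit (2 : O)) : ∀ y ∈ O, (1 : K) ≠ 2 * y := by
  intro y hy h
  apply h2
  refine IsUnit.of_mul_eq_one (a := 2) ⟨y, hy⟩ ?_
  apply Subtype.ext
  push_cast
  exact h.symm

lemma int_dvd_of_D (h2 : ¬ IsUnit (2 : O)) {c : ℤ} {y : K} (hy : y ∈ O)
    (h : (c : K) = 2 * y) : (2 : ℤ) ∣ c := by
  rcases Int.even_or_odd c with he | ho
  · exact he.two_dvd
  · exfalso
    obtain ⟨q, hq⟩ := ho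
    refine not_one_D h2 (y - q) (sub_mem hy (intCast_mem O.toSubring q)) ?_
    have h1 : (1 : K) = (c : K) - 2 * q := by
      rw [hq]; push_cast; ring
    rw [h1, h]; ring

lemma two_dvd_of_map_eq_zero {Q : ℤ[X]} (h : Q.map (Int.castRingHom (ZMod 2)) = 0) :
    (2 : ℤ[X]) ∣ Q := by
  have hC : Polynomial.C (2 : ℤ) ∣ Q := by
    rw [Polynomial.C_dvd_iff_dvd_coeff]
    intro i
    have h2 := congrArg (fun p => Polynomial.coeff p i) h
    simp only [Polynomial.coeff_map, Polynomial.coeff_zero] at h2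
    exact (ZMod.intCast_zmod_eq_zero_iff_dvd _ 2).mp h2
  rwa [map_ofNat] at hC

lemma frob (P : ℤ[X]) : ∃ R : ℤ[X], P ^ 2 = Polynomial.expand ℤ 2 P + 2 * R := by
  have h : ((P ^ 2 - Polynomial.expand ℤ 2 P).map (Int.castRingHom (ZMod 2))) = 0 := by
    have he := Polynomial.map_frobenius_expand 2 (P.map (Int.castRingHom (ZMod 2)))
    rw [ZMod.frobenius_zmod, Polynomial.map_id] at he
    rw [Polynomial.map_sub, Polynomial.map_pow, Polynomial.map_expand, he, sub_self]
  obtain ⟨R, hR⟩ := two_dvd_of_map_eq_zero h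
  exact ⟨R, by rw [← hR]; ring⟩


lemma two_mem : (2 : K) ∈ O := by
  simpa using natCast_mem O.toSubring 2

lemma key (h2 : ¬ IsUnit (2 : O)) (j : ℕ) (η : K) (hη : η ^ (2 ^ j) = -1) (P : ℤ[X])
    (hP : ∃ y ∈ O, (aeval η) P = 2 * y) :
    (X + 1) ^ (2 ^ j) ∣ P.map (Int.castRingHom (ZMod 2)) := by
  induction j generalizing η P with
  | zero =>
    rw [pow_zero, pow_one] at hη
    subst hη
    rw [pow_zero, pow_one]
    obtain ⟨y, hy, hPy⟩ := hP
    have e1 : ((-1 : K)) = (((-1 : ℤ) : K)) := by push_cast; ring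
    have e2 : (aeval ((-1 : K))) P = ((P.eval (-1) : ℤ) : K) := by
      rw [e1]
      rw [show (((-1 : ℤ) : K)) = algebraMap ℤ K (-1) by simp]
      rw [aeval_algebraMap_apply_eq_algebraMap_eval]
      simp
    have hdvd : (2 : ℤ) ∣ P.eval (-1) := by
      apply int_dvd_of_D h2 hy
      rw [← e2, hPy]
    -- now show X + 1 divides the mod-2 reduction
    have hroot : (P.map (Int.castRingHom (ZMod 2))).IsRoot (((-1 : ℤ) : ZMod 2)) := by
      unfold Polynomial.IsRoot
      rw [Polynomial.eval_intCast_map]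
      exact (ZMod.intCast_zmod_eq_zero_iff_dvd _ 2).mpr hdvd
    have hfac := (Polynomial.dvd_iff_isRoot).mpr hroot
    have : (X - Polynomial.C (((-1 : ℤ) : ZMod 2))) = (X + 1 : (ZMod 2)[X]) := by
      have : (((-1 : ℤ) : ZMod 2)) = -1 := by push_cast; ring
      rw [this]
      simp [sub_eq_add_neg]
      exact CharTwo.neg_eq 1
    rwa [this] at hfac
  | succ j ih =>
    obtain ⟨y, hy, hxy⟩ := hP
    have hη2 : (η ^ 2) ^ (2 ^ j) = -1 := by
      rw [← pow_mul]
      rw [show 2 * 2 ^ j = 2 ^ (j + 1) by ring]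
      exact hη
    have hηO : η ∈ O := by
      refine root_mem (t := 2 ^ (j + 1) * 2) (by positivity) ?_
      rw [pow_mul, hη]; norm_num
    -- Step 1: aeval (η^2) P ∈ 2O
    obtain ⟨R, hR⟩ := frob P
    have h1 : ∃ y1 ∈ O, (aeval (η ^ 2)) P = 2 * y1 := by
      refine ⟨2 * y ^ 2 - (aeval η) R, sub_mem (mul_mem two_mem (pow_mem hy 2))
        (aeval_mem hηO R), ?_⟩
      have e3 : (aeval (η ^ 2)) P = ((aeval η) P) ^ 2 - 2 * (aeval η) R := by
        rw [← Polynomial.expand_aeval 2 P η, ← map_pow, hR]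
        simp only [map_add, map_mul, map_ofNat]
        ring
      rw [e3, hxy]; ring
    obtain ⟨Sb, hSb⟩ := ih (η ^ 2) hη2 P h1
    -- lift Sb to ℤ[X]
    obtain ⟨S, hS⟩ := Polynomial.map_surjective (Int.castRingHom (ZMod 2))
      (fun x => ZMod.intCast_surjective x) Sb
    -- P = (X^(2^j) + 1) * S + 2 * T
    have hmapXp : ((X ^ (2 ^ j) + 1 : ℤ[X]).map (Int.castRingHom (ZMod 2)))
        = (X + 1 : (ZMod 2)[X]) ^ (2 ^ j) := by
      rw [Polynomial.map_add, Polynomial.map_pow, Polynomial.map_X, Polynomial.map_one]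
      rw [add_pow_char_pow]
      simp
    have hdiff : ((P - ((X ^ (2 ^ j) + 1) * S)).map (Int.castRingHom (ZMod 2))) = 0 := by
      rw [Polynomial.map_sub, Polynomial.map_mul, hS, hmapXp, hSb, sub_self]
    obtain ⟨T, hT⟩ := two_dvd_of_map_eq_zero hdiff
    have hPdec : P = (X ^ (2 ^ j) + 1) * S + 2 * T := by rw [← hT]; ring
    set i : K := η ^ (2 ^ j) with hidef
    have hi2 : i ^ 2 = -1 := by
      rw [hidef, ← pow_mul, show 2 ^ j * 2 = 2 ^ (j + 1) by ring]
      exact hη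
    set s : K := (aeval η) S with hsdef
    have hiO : i ∈ O := pow_mem hηO _
    set y1 : K := y - (aeval η) T with hy1def
    have hy1 : y1 ∈ O := sub_mem hy (aeval_mem hηO T)
    have hs : (i + 1) * s = 2 * y1 := by
      have e4 : (aeval η) P = (i + 1) * s + 2 * (aeval η) T := by
        rw [hPdec]
        simp only [map_add, map_mul, map_pow, map_one, map_ofNat, aeval_X]
        rfl
      rw [hy1def, mul_sub, ← hxy, e4]; ring
    have hss : ∃ y2 ∈ O, (aeval (η ^ 2)) S = 2 * y2 := by
      obtain ⟨R2, hR2⟩ := frob S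
      have e5 : i * s ^ 2 = 2 * y1 ^ 2 := by
        have e6 : ((i + 1) * s) ^ 2 = (2 * y1) ^ 2 := by rw [hs]
        have e7 : 2 * (i * s ^ 2) = 2 * (2 * y1 ^ 2) := by
          linear_combination e6 - s ^ 2 * hi2
        exact mul_left_cancel₀ (two_ne_zero) e7
      have e8 : s ^ 2 = 2 * (-(i * y1 ^ 2)) := by
        linear_combination (-i) * e5 + s ^ 2 * hi2
      refine ⟨-(i * y1 ^ 2) - (aeval η) R2,
        sub_mem (neg_mem (mul_mem hiO (pow_mem hy1 2))) (aeval_mem hηO R2), ?_⟩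
      have e9 : (aeval (η ^ 2)) S = s ^ 2 - 2 * (aeval η) R2 := by
        rw [← Polynomial.expand_aeval 2 S η, ← map_pow, hR2]
        simp only [map_add, map_mul, map_ofNat]
        ring
      rw [e9, e8]; ring
    have hSdvd := ih (η ^ 2) hη2 S hss
    rw [hPdec]
    rw [Polynomial.map_add, Polynomial.map_mul, hmapXp]
    have hmap2 : ((2 * T : ℤ[X]).map (Int.castRingHom (ZMod 2))) = 0 := by
      rw [Polynomial.map_mul, Polynomial.map_ofNat]
      have h20 : (2 : (ZMod 2)[X]) = 0 := by
        simpa using CharP.cast_eq_zero ((ZMod 2)[X]) 2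
      rw [h20, zero_mul]
    rw [hmap2, add_zero]
    rw [show (2 : ℕ) ^ (j + 1) = 2 ^ j + 2 ^ j by ring, pow_add]
    exact mul_dvd_mul_left _ hSdvd


lemma evenP (h2 : ¬ IsUnit (2 : O)) {j : ℕ} {ζ : K} (hζ : ζ ^ (2 ^ j) = -1)
    (P : ℤ[X]) (hdeg : P.natDegree < 2 ^ j) (hP : ∃ y ∈ O, (aeval ζ) P = 2 * y) :
    (2 : ℤ[X]) ∣ P := by
  have hk := key h2 j ζ hζ P hP
  have hmap0 : P.map (Int.castRingHom (ZMod 2)) = 0 := by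
    by_contra hne
    have hle := Polynomial.natDegree_le_of_dvd hk hne
    have hXdeg : ((X + 1 : (ZMod 2)[X]) ^ (2 ^ j)).natDegree = 2 ^ j := by
      have hmon : (X + 1 : (ZMod 2)[X]).Monic := by
        simpa using Polynomial.monic_X_add_C (1 : ZMod 2)
      rw [hmon.natDegree_pow]
      have : (X + 1 : (ZMod 2)[X]).natDegree = 1 := by
        simpa using Polynomial.natDegree_X_add_C (1 : ZMod 2)
      rw [this, mul_one]
    rw [hXdeg] at hle
    have := (Polynomial.natDegree_map_le (f := Int.castRingHom (ZMod 2)) (p := P)).trans_lt hdeg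
    omega
  exact two_dvd_of_map_eq_zero hmap0

lemma powdvd (h2 : ¬ IsUnit (2 : O)) {j : ℕ} {ζ : K} (hζ : ζ ^ (2 ^ j) = -1) :
    ∀ m : ℕ, ∀ P : ℤ[X], P.natDegree < 2 ^ j →
    (∃ y ∈ O, (aeval ζ) P = 2 ^ m * y) → ∀ r : ℕ, (2 : ℤ) ^ m ∣ P.coeff r := by
  intro m
  induction m with
  | zero => intro P _ _ r; simp
  | succ m ihm =>
    intro P hdeg hP r
    obtain ⟨y, hy, hxy⟩ := hP
    rcases eq_or_ne P 0 with rfl | hP0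
    · simp
    have hD : ∃ y1 ∈ O, (aeval ζ) P = 2 * y1 := by
      refine ⟨2 ^ m * y, mul_mem (pow_mem two_mem m) hy, ?_⟩
      rw [hxy]; ring
    obtain ⟨P', hP'⟩ := evenP h2 hζ P hdeg hD
    have hP'0 : P' ≠ 0 := by rintro rfl; simp at hP'; exact hP0 hP'
    have hdeg' : P'.natDegree < 2 ^ j := by
      have : P'.natDegree ≤ P.natDegree :=
        Polynomial.natDegree_le_of_dvd (Dvd.intro_left 2 hP'.symm) hP0
      omega
    have haev : (aeval ζ) P' = 2 ^ m * y := by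
      have e1 : (aeval ζ) P = 2 * (aeval ζ) P' := by
        rw [hP', map_mul, map_ofNat]
      have e2 : (2 : K) * (aeval ζ) P' = 2 * (2 ^ m * y) := by
        rw [← e1, hxy]; ring
      exact mul_left_cancel₀ two_ne_zero e2
    have hc := ihm P' hdeg' ⟨y, hy, haev⟩ r
    have hco : P.coeff r = 2 * P'.coeff r := by
      rw [hP']
      have : (2 : ℤ[X]) = Polynomial.C 2 := by simp
      rw [this, Polynomial.coeff_C_mul]
    rw [hco, pow_succ]
    obtain ⟨w, hw⟩ := hc
    exact ⟨w, by rw [hw]; ring⟩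

lemma sum_range_add' {M : Type*} [AddCommMonoid M] (f : ℕ → M) (a b : ℕ) :
    ∑ u ∈ Finset.range (a + b), f u
      = ∑ r ∈ Finset.range a, f r + ∑ r ∈ Finset.range b, f (a + r) := by
  induction b with
  | zero => simp
  | succ b ih => rw [← Nat.add_assoc, Finset.sum_range_succ, ih, Finset.sum_range_succ, add_assoc]

end Stmt0Aux

/-- If `ζ` is a primitive `2^n`-th root of unity in a characteristic-zero field `K`
with a valuation ring `O ⊆ K` whose maximal ideal contains `2`, and a sum of `2^m` powers of `ζ`
lies in `2^m·O`, then either all those powers of `ζ` are equal or the sum is zero. -/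
theorem stmt_0 {K : Type*} [Field K] [CharZero K] (n m : ℕ) (hn : 0 < n) (hm : 0 < m)
    (ζ : K) (hζ : IsPrimitiveRoot ζ (2 ^ n))
    (O : ValuationSubring K) (h2 : ¬ IsUnit (2 : O))
    (l : Fin (2 ^ m) → ℤ)
    (hsum : ∃ y : K, y ∈ O ∧ (∑ i, ζ ^ (l i)) = (2 : K) ^ m * y) :
    (∀ i j, ζ ^ (l i) = ζ ^ (l j)) ∨ (∑ i, ζ ^ (l i)) = 0 := by
  classical
  open Stmt0Aux in
  obtain ⟨y, hyO, hsum⟩ := hsum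
  set N := 2 ^ (n - 1) with hNdef
  have hNpos : 0 < N := Nat.pow_pos (by norm_num)
  have h2N : 2 ^ n = N + N := by
    rw [hNdef, ← two_mul]
    rw [show 2 * 2 ^ (n - 1) = 2 ^ (n - 1 + 1) by rw [pow_succ]; ring]
    congr 1
    omega
  have hpow1 : ζ ^ (2 ^ n) = 1 := hζ.pow_eq_one
  have hζ0 : ζ ≠ 0 := by
    intro h
    rw [h, zero_pow (by positivity)] at hpow1
    exact zero_ne_one hpow1
  have hminus : ζ ^ N = -1 := by
    have hsq : ζ ^ N * ζ ^ N = 1 := by rw [← pow_add, ← h2N]; exact hpow1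
    rcases mul_self_eq_one_iff.mp hsq with h | h
    · exact absurd h (hζ.pow_ne_one_of_pos_of_lt hNpos.ne' (by omega))
    · exact h
  -- reduce the integer exponents to natural exponents
  set t : Fin (2 ^ m) → ℕ := fun i => (l i % ((2 ^ n : ℕ) : ℤ)).toNat with htdef
  have htlt : ∀ i, t i < 2 ^ n := by
    intro i
    have h0 : (0 : ℤ) < ((2 ^ n : ℕ) : ℤ) := by positivity
    have h1 := Int.emod_nonneg (l i) (ne_of_gt h0)
    have h2' := Int.emod_lt_of_pos (l i) h0
    simp only [htdef]
    omega
  have hzp : ∀ i, ζ ^ (l i) = ζ ^ (t i) := by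
    intro i
    have hdm : l i = ((2 ^ n : ℕ) : ℤ) * (l i / ((2 ^ n : ℕ) : ℤ)) + l i % ((2 ^ n : ℕ) : ℤ) :=
      (Int.mul_ediv_add_emod _ _).symm
    have h1 := Int.emod_nonneg (l i) (by positivity : ((2 ^ n : ℕ) : ℤ) ≠ 0)
    calc ζ ^ (l i) = ζ ^ (((2 ^ n : ℕ) : ℤ) * (l i / ((2 ^ n : ℕ) : ℤ)) + l i % ((2 ^ n : ℕ) : ℤ)) := by
          rw [← hdm]
      _ = (ζ ^ ((2 ^ n : ℕ) : ℤ)) ^ (l i / ((2 ^ n : ℕ) : ℤ)) * ζ ^ (l i % ((2 ^ n : ℕ) : ℤ)) := by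
          rw [zpow_add₀ hζ0, zpow_mul]
      _ = ζ ^ (l i % ((2 ^ n : ℕ) : ℤ)) := by
          rw [zpow_natCast, hpow1, one_zpow, one_mul]
      _ = ζ ^ (t i) := by
          rw [htdef]
          rw [show (l i % ((2 ^ n : ℕ) : ℤ)) = (((l i % ((2 ^ n : ℕ) : ℤ)).toNat : ℕ) : ℤ) by
            rw [Int.toNat_of_nonneg h1]]
          rw [zpow_natCast]
  -- counting function
  set cnt : ℕ → ℕ := fun u => (Finset.univ.filter (fun i => t i = u)).card with hcntdef
  set c : ℕ → ℤ := fun r => (cnt r : ℤ) - (cnt (N + r) : ℤ) with hcdef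
  have hfib : (∑ i, ζ ^ (t i)) = ∑ u ∈ Finset.range (2 ^ n), (cnt u : K) * ζ ^ u := by
    rw [← Finset.sum_fiberwise_of_maps_to (fun i _ => Finset.mem_range.mpr (htlt i))
      (fun i => ζ ^ (t i))]
    refine Finset.sum_congr rfl fun u _ => ?_
    rw [Finset.sum_congr rfl (fun i hi => by
      rw [(Finset.mem_filter.mp hi).2])]
    rw [Finset.sum_const, nsmul_eq_mul, hcntdef]
  have hS : (∑ i, ζ ^ (l i)) = ∑ r ∈ Finset.range N, (c r : K) * ζ ^ r := by
    calc (∑ i, ζ ^ (l i)) = ∑ i, ζ ^ (t i) := Finset.sum_congr rfl fun i _ => hzp i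
      _ = ∑ u ∈ Finset.range (2 ^ n), (cnt u : K) * ζ ^ u := hfib
      _ = ∑ r ∈ Finset.range N, (cnt r : K) * ζ ^ r
            + ∑ r ∈ Finset.range N, (cnt (N + r) : K) * ζ ^ (N + r) := by
          rw [h2N, sum_range_add']
      _ = ∑ r ∈ Finset.range N, (c r : K) * ζ ^ r := by
          rw [← Finset.sum_add_distrib]
          refine Finset.sum_congr rfl fun r _ => ?_
          rw [pow_add, hminus, hcdef]
          push_cast
          ring
  -- the polynomial
  set P : Polynomial ℤ := ∑ r ∈ Finset.range N, Polynomial.C (c r) * Polynomial.X ^ r with hPdef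
  have haevP : (Polynomial.aeval ζ) P = ∑ r ∈ Finset.range N, (c r : K) * ζ ^ r := by
    rw [hPdef, map_sum]
    refine Finset.sum_congr rfl fun r _ => ?_
    simp
  have hdegP : P.natDegree < N := by
    have hle : P.natDegree ≤ N - 1 := by
      refine Polynomial.natDegree_sum_le_of_forall_le _ _ fun r hr => ?_
      refine (Polynomial.natDegree_mul_le).trans ?_
      have := Finset.mem_range.mp hr
      simp only [Polynomial.natDegree_C, Polynomial.natDegree_X_pow]
      omega
    omega
  have hcoeff : ∀ r, r < N → P.coeff r = c r := by
    intro r hr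
    rw [hPdef, Polynomial.finset_sum_coeff]
    rw [Finset.sum_eq_single r]
    · simp [Polynomial.coeff_C_mul, Polynomial.coeff_X_pow]
    · intro b _ hbr
      simp [Polynomial.coeff_C_mul, Polynomial.coeff_X_pow, Ne.symm hbr]
    · intro h
      exact absurd (Finset.mem_range.mpr hr) h
  have hdvd : ∀ r, (2 : ℤ) ^ m ∣ P.coeff r := by
    refine powdvd h2 (j := n - 1) (by rw [← hNdef]; exact hminus) m P (by rw [← hNdef]; exact hdegP)
      ⟨y, hyO, ?_⟩
    rw [haevP, ← hS, hsum]
  -- counting totals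
  have htotal : ∑ u ∈ Finset.range (2 ^ n), cnt u = 2 ^ m := by
    have := Finset.card_eq_sum_card_fiberwise
      (fun i (_ : i ∈ (Finset.univ : Finset (Fin (2 ^ m)))) => Finset.mem_range.mpr (htlt i))
    rw [Finset.card_univ, Fintype.card_fin] at this
    exact this.symm
  have hsplit : ∑ r ∈ Finset.range N, (cnt r + cnt (N + r)) = 2 ^ m := by
    rw [Finset.sum_add_distrib, ← sum_range_add' cnt N N, ← h2N, htotal]
  by_cases hall : ∀ r < N, cnt r = cnt (N + r)
  · right
    rw [hS]
    refine Finset.sum_eq_zero fun r hr => ?_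
    have : c r = 0 := by
      rw [hcdef]
      simp [hall r (Finset.mem_range.mp hr)]
    rw [this]
    simp
  · left
    push_neg at hall
    obtain ⟨r0, hr0, hne⟩ := hall
    have hc0 : c r0 ≠ 0 := by
      rw [hcdef]
      intro h
      exact hne (by exact_mod_cast sub_eq_zero.mp h)
    have hblow : (2 : ℤ) ^ m ≤ |c r0| :=
      Int.le_of_dvd (abs_pos.mpr hc0) ((dvd_abs _ _).mpr (by rw [← hcoeff r0 hr0]; exact hdvd r0))
    have hup : cnt r0 + cnt (N + r0) ≤ 2 ^ m := by
      rw [← hsplit]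
      exact Finset.single_le_sum (f := fun r => cnt r + cnt (N + r))
        (fun r _ => Nat.zero_le _) (Finset.mem_range.mpr hr0)
    -- conclude that one of the two counts is 2^m
    have hkey : cnt r0 = 2 ^ m ∨ cnt (N + r0) = 2 ^ m := by
      have hblow' : ((2 ^ m : ℕ) : ℤ) ≤ |(cnt r0 : ℤ) - (cnt (N + r0) : ℤ)| := by
        push_cast
        simp only [hcdef] at hblow
        exact hblow
      obtain ⟨M2, hM2⟩ : ∃ M2, 2 ^ m = M2 := ⟨_, rfl⟩
      rw [hM2] at hblow' hup ⊢
      rcases abs_cases ((cnt r0 : ℤ) - (cnt (N + r0) : ℤ)) with ⟨h1, _⟩ | ⟨h1, _⟩ <;>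
        rw [h1] at hblow' <;> omega
    have huniv : ∃ u0, ∀ i, t i = u0 := by
      rcases hkey with h | h
      · refine ⟨r0, fun i => ?_⟩
        have hcard : (Finset.univ.filter (fun i => t i = r0)).card
            = Fintype.card (Fin (2 ^ m)) := by
          rw [Fintype.card_fin]
          exact h
        have := Finset.eq_univ_of_card _ hcard
        have hi : i ∈ Finset.univ.filter (fun i => t i = r0) := by
          rw [this]; exact Finset.mem_univ i
        exact (Finset.mem_filter.mp hi).2
      · refine ⟨N + r0, fun i => ?_⟩
        have hcard : (Finset.univ.filter (fun i => t i = N + r0)).card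
            = Fintype.card (Fin (2 ^ m)) := by
          rw [Fintype.card_fin]
          exact h
        have := Finset.eq_univ_of_card _ hcard
        have hi : i ∈ Finset.univ.filter (fun i => t i = N + r0) := by
          rw [this]; exact Finset.mem_univ i
        exact (Finset.mem_filter.mp hi).2
    obtain ⟨u0, hu0⟩ := huniv
    intro i j
    rw [hzp i, hzp j, hu0 i, hu0 j]
end

section
/- The automorphism group of the abelian group C_{2^n} × C_2 × C_2, for n > 1, has a Sylow 3-subgroup of order 3; more precisely, the largest odd-order subgroup of Aut(C_{2^n} × C_2 × C_2) has order 3. Consequently every subgroup of odd order of Aut(C_{2^n} × C_2 × C_2) is trivial or isomorphic to C_3. -/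
namespace Stmt1Aux

instance addAutGroup (A : Type) [AddGroup A] : Group (AddAut A) :=
  inferInstanceAs (Group (Multiplicative (AddAut A)))

@[simp] lemma AddAut.mul_apply {A : Type} [AddGroup A] (e₁ e₂ : AddAut A) (m : A) :
    (e₁ * e₂) m = e₁ (e₂ m) := rfl

@[simp] lemma AddAut.one_apply {A : Type} [AddGroup A] (m : A) : (1 : AddAut A) m = m := rfl

@[simp] lemma AddAut.inv_apply_self {A : Type} [AddGroup A] (e : AddAut A) (m : A) :
    e (e⁻¹ m) = m := e.apply_symm_apply m

@[simp] lemma AddAut.apply_inv_self {A : Type} [AddGroup A] (e : AddAut A) (m : A) :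
    e⁻¹ (e m) = m := e.symm_apply_apply m

abbrev B2 : Type := ZMod 2 × ZMod 2

lemma b2_add_self (w : B2) : w + w = 0 := by revert w; decide

lemma z2_add (p q : ZMod 2) : q + (p + q) = p := by revert p q; decide

lemma card_addAut_B2 : Nat.card (AddAut B2) = 6 := by
  rw [Nat.card_eq_fintype_card]; decide

variable {n : ℕ}

lemma even_of_two_mul_eq_zero (hn : 1 < n) (a : ZMod (2 ^ n)) (h : 2 * a = 0) :
    ∃ c : ZMod (2 ^ n), a = 2 * c := by
  haveI : NeZero (2 ^ n) := ⟨pow_ne_zero n two_ne_zero⟩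
  have ha : ((a.val : ℕ) : ZMod (2 ^ n)) = a := by
    rw [ZMod.natCast_val, ZMod.cast_id]
  have h2 : ((2 * a.val : ℕ) : ZMod (2 ^ n)) = 0 := by push_cast [ha]; exact h
  have hdvd : 2 ^ n ∣ 2 * a.val := (ZMod.natCast_eq_zero_iff _ _).mp h2
  obtain ⟨k, hk⟩ := hdvd
  have hn' : 2 ^ n = 2 * 2 ^ (n - 1) := by
    rw [← pow_succ']; congr 1; omega
  have hk2 : 2 * a.val = 2 * (2 ^ (n - 1) * k) := by rw [hk, hn']; ring
  have hval : a.val = 2 ^ (n - 1) * k := Nat.eq_of_mul_eq_mul_left (by norm_num) hk2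
  have h2dvd : 2 ∣ a.val := by
    refine ⟨2 ^ (n - 2) * k, ?_⟩
    rw [hval, show n - 1 = 1 + (n - 2) by omega, pow_add]; ring
  obtain ⟨m, hm⟩ := h2dvd
  exact ⟨(m : ZMod (2 ^ n)), by rw [← ha, hm]; push_cast; ring⟩

lemma one_ne_two_mul (hn : 1 < n) (c : ZMod (2 ^ n)) : (1 : ZMod (2 ^ n)) ≠ 2 * c := by
  intro h
  have h2 : (2 : ℕ) ∣ 2 ^ n := dvd_pow_self 2 (by omega)
  have := congrArg (ZMod.castHom h2 (ZMod 2)) h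
  simp only [map_one, map_mul, map_ofNat] at this
  have h20 : (2 : ZMod 2) = 0 := by decide
  rw [h20, zero_mul] at this
  exact one_ne_zero this

lemma snd_eq_zero (hn : 1 < n) (f : AddAut (ZMod (2 ^ n) × B2)) {a : ZMod (2 ^ n)}
    (h : 2 * a = 0) : (f (a, 0)).2 = 0 := by
  obtain ⟨c, rfl⟩ := even_of_two_mul_eq_zero hn a h
  have hsplit : ((2 * c : ZMod (2 ^ n)), (0 : B2)) = (c, 0) + (c, 0) := by
    simp [Prod.ext_iff, two_mul]
  rw [hsplit, map_add, Prod.snd_add]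
  exact b2_add_self _

lemma two_mul_fst_eq_zero (f : AddAut (ZMod (2 ^ n) × B2)) (b : B2) :
    2 * (f (0, b)).1 = 0 := by
  have h0 : ((0 : ZMod (2 ^ n)), b) + (0, b) = 0 := by
    simp [Prod.ext_iff, b2_add_self]
  have h : f (0, b) + f (0, b) = 0 := by rw [← map_add, h0, map_zero]
  have h1 := congrArg Prod.fst h
  rw [Prod.fst_add] at h1
  rw [two_mul]; exact h1

lemma fst_even (hn : 1 < n) (f : AddAut (ZMod (2 ^ n) × B2)) (b : B2) :
    ∃ c, (f (0, b)).1 = 2 * c := by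
  obtain ⟨c, hc⟩ := even_of_two_mul_eq_zero hn _ (two_mul_fst_eq_zero f b)
  exact ⟨c, hc⟩

lemma comp_key (hn : 1 < n) (f g : AddAut (ZMod (2 ^ n) × B2)) (b : B2) :
    (f (g (0, b))).2 = (f (0, (g (0, b)).2)).2 := by
  have hsplit : g (0, b) = ((g (0, b)).1, 0) + (0, (g (0, b)).2) := by
    simp [Prod.ext_iff]
  have h2a : 2 * (g (0, b)).1 = 0 := two_mul_fst_eq_zero g b
  conv_lhs => rw [hsplit]
  rw [map_add, Prod.snd_add, snd_eq_zero hn f h2a, zero_add]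

/-- The restriction homomorphism `Aut(C_{2^n} × C_2 × C_2) → Aut(C_2 × C_2)`. -/
def psi (hn : 1 < n) : AddAut (ZMod (2 ^ n) × B2) →* AddAut B2 :=
  MonoidHom.mk'
    (fun f =>
      { toFun := fun b => (f (0, b)).2
        invFun := fun b => (f⁻¹ (0, b)).2
        left_inv := fun b => by
          show (f⁻¹ (0, (f (0, b)).2)).2 = b
          rw [← comp_key hn f⁻¹ f b, AddAut.apply_inv_self]
        right_inv := fun b => by
          show (f (0, (f⁻¹ (0, b)).2)).2 = b
          rw [← comp_key hn f f⁻¹ b, AddAut.inv_apply_self]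
        map_add' := fun b b' => by
          show (f (0, b + b')).2 = (f (0, b)).2 + (f (0, b')).2
          have h1 : ((0 : ZMod (2 ^ n)), b + b') = (0, b) + (0, b') := by
            simp [Prod.ext_iff]
          rw [h1, map_add, Prod.snd_add] })
    (fun f g => by
      refine AddEquiv.ext fun b => ?_
      show ((f * g) (0, b)).2 = (f (0, (g (0, b)).2)).2
      rw [AddAut.mul_apply]
      exact comp_key hn f g b)

lemma order_two_pow_of_ker (hn : 1 < n) (f : AddAut (ZMod (2 ^ n) × B2))
    (hf : ∀ b : B2, (f (0, b)).2 = b) : f ^ (2 ^ n) = 1 := by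
  haveI : NeZero (2 ^ n) := ⟨pow_ne_zero n two_ne_zero⟩
  -- `f (0, b) = (2c, b)`
  have hfst : ∀ b : B2, ∃ c, f (0, b) = ((2 * c : ZMod (2 ^ n)), b) := by
    intro b
    obtain ⟨c, hc⟩ := fst_even hn f b
    exact ⟨c, Prod.ext hc (hf b)⟩
  -- decomposition of an arbitrary element
  have hdec : ∀ x : ZMod (2 ^ n) × B2,
      x = x.1.val • ((1 : ZMod (2 ^ n)), (0 : B2)) + (0, x.2) := by
    intro x
    have h1 : x.1.val • ((1 : ZMod (2 ^ n)), (0 : B2))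
        = (((x.1.val : ℕ) : ZMod (2 ^ n)), (0 : B2)) := by
      rw [Prod.smul_mk, smul_zero, nsmul_eq_mul, mul_one]
    rw [h1, ZMod.natCast_val, ZMod.cast_id]
    simp [Prod.ext_iff]
  have happ : ∀ x : ZMod (2 ^ n) × B2,
      f x = x.1.val • f (1, 0) + f (0, x.2) := by
    intro x
    conv_lhs => rw [hdec x]
    rw [map_add, map_nsmul]
  -- `f (1,0)` has odd first coordinate
  have hu : ∃ w, (f (1, 0)).1 = 1 + 2 * w := by
    obtain ⟨z, hz⟩ : ∃ z, f z = ((1 : ZMod (2 ^ n)), (0 : B2)) :=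
      ⟨f⁻¹ (1, 0), by simp⟩
    have h1 : (1 : ZMod (2 ^ n)) = (z.1.val : ZMod (2 ^ n)) * (f (1, 0)).1
        + (f (0, z.2)).1 := by
      have := congrArg Prod.fst ((happ z).symm.trans hz)
      rw [Prod.fst_add, Prod.smul_fst, nsmul_eq_mul] at this
      exact this.symm
    obtain ⟨c2, hc2⟩ := fst_even hn f z.2
    have hvu : (((f (1, 0)).1.val : ℕ) : ZMod (2 ^ n)) = (f (1, 0)).1 := by
      rw [ZMod.natCast_val, ZMod.cast_id]
    rcases Nat.even_or_odd (f (1, 0)).1.val with he | ho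
    · exfalso
      obtain ⟨m, hm⟩ := he
      have hufst : (f (1, 0)).1 = 2 * (m : ZMod (2 ^ n)) := by
        rw [← hvu, hm]; push_cast; ring
      rw [hufst, hc2] at h1
      exact one_ne_two_mul hn ((z.1.val : ZMod (2 ^ n)) * (m : ZMod (2 ^ n)) + c2)
        (by rw [h1]; ring)
    · obtain ⟨m, hm⟩ := ho
      refine ⟨(m : ZMod (2 ^ n)), ?_⟩
      rw [← hvu, hm]; push_cast; ring
  -- E1 : first coordinate of `f x - x` is even
  have E1 : ∀ x : ZMod (2 ^ n) × B2, ∃ a, (f x).1 = x.1 + 2 * a := by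
    intro x
    obtain ⟨w, hw⟩ := hu
    obtain ⟨c2, hc2⟩ := fst_even hn f x.2
    refine ⟨(x.1.val : ZMod (2 ^ n)) * w + c2, ?_⟩
    have h1 := congrArg Prod.fst (happ x)
    rw [Prod.fst_add, Prod.smul_fst, nsmul_eq_mul, hw, hc2] at h1
    rw [h1, ZMod.natCast_val, ZMod.cast_id]
    ring
  -- E2 : on elements with even first coordinate, `f` moves by (even, 0)
  have E2 : ∀ (a : ZMod (2 ^ n)) (b : B2),
      ∃ c, f ((2 * a : ZMod (2 ^ n)), b) = ((2 * a : ZMod (2 ^ n)), b) + (2 * c, 0) := by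
    intro a b
    have hsplit : ((2 * a : ZMod (2 ^ n)), b) = ((a, 0) + (a, 0)) + (0, b) := by
      simp [Prod.ext_iff, two_mul]
    obtain ⟨c2, hc2⟩ := hfst b
    refine ⟨(f (a, 0)).1 + c2 - a, ?_⟩
    rw [hsplit, map_add, map_add, hc2]
    have h2 : f (a, 0) + f (a, 0) = ((2 * (f (a, 0)).1 : ZMod (2 ^ n)), (0 : B2)) := by
      refine Prod.ext ?_ ?_
      · rw [Prod.fst_add]; ring
      · rw [Prod.snd_add]; exact b2_add_self _
    rw [h2]
    refine Prod.ext ?_ ?_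
    · simp only [Prod.fst_add]; ring
    · simp only [Prod.snd_add]; simp
  -- main induction
  have key : ∀ j, 1 ≤ j → ∀ x : ZMod (2 ^ n) × B2,
      ∃ c, (f ^ (2 ^ j)) x = x + ((((2 ^ j : ℕ) : ZMod (2 ^ n)) * c, 0)) := by
    intro j
    induction j with
    | zero => omega
    | succ j ih =>
      intro _ x
      by_cases hj0 : j = 0
      · subst hj0
        have hpow : f ^ (2 ^ 1) = f * f := by norm_num [pow_succ, pow_one]
        rw [hpow, AddAut.mul_apply]
        obtain ⟨a, ha⟩ := E1 x
        have hx : f x = x + ((2 * a : ZMod (2 ^ n)), (f x).2 - x.2) := by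
          refine Prod.ext ?_ ?_
          · rw [ha, Prod.fst_add]
          · rw [Prod.snd_add]; ring
        rw [hx, map_add]
        obtain ⟨c, hc⟩ := E2 a ((f x).2 - x.2)
        rw [hc, hx]
        refine ⟨2 * a + c, ?_⟩
        refine Prod.ext ?_ ?_
        · simp only [Prod.fst_add]; push_cast; ring
        · simp only [Prod.snd_add]
          have hb : ∀ u t : B2, u + t + (u + t - u + 0) = u + 0 := by decide
          exact hb x.2 ((f x).2 - x.2)
      · have hj1 : 1 ≤ j := by omega
        have ihj := ih hj1
        have hpow : f ^ (2 ^ (j + 1)) = f ^ (2 ^ j) * f ^ (2 ^ j) := by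
          rw [← pow_add]; congr 1; omega
        rw [hpow, AddAut.mul_apply]
        obtain ⟨c, hc⟩ := ihj x
        rw [hc, map_add, hc]
        -- compute (f ^ 2^j) ((2^j * c, 0))
        have hy : (((2 ^ j : ℕ) : ZMod (2 ^ n)) * c, (0 : B2))
            = (((2 ^ (j-1) : ℕ) : ZMod (2 ^ n)) * c, (0 : B2))
              + (((2 ^ (j-1) : ℕ) : ZMod (2 ^ n)) * c, (0 : B2)) := by
          refine Prod.ext ?_ ?_
          · rw [Prod.fst_add]
            have hsum : (2 ^ j : ℕ) = 2 ^ (j - 1) + 2 ^ (j - 1) := by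
              conv_lhs => rw [show j = (j - 1) + 1 by omega]
              rw [pow_succ]; ring
            rw [hsum]; push_cast; ring
          · rw [Prod.snd_add]; simp
        obtain ⟨d, hd⟩ := ihj (((2 ^ (j-1) : ℕ) : ZMod (2 ^ n)) * c, (0 : B2))
        rw [hy, map_add, hd]
        refine ⟨c + d, ?_⟩
        refine Prod.ext ?_ ?_
        · simp only [Prod.fst_add]
          have h2j : ((2 ^ (j + 1) : ℕ) : ZMod (2 ^ n))
              = 2 * ((2 ^ j : ℕ) : ZMod (2 ^ n)) := by push_cast; ring
          have h2j' : ((2 ^ j : ℕ) : ZMod (2 ^ n))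
              = 2 * ((2 ^ (j - 1) : ℕ) : ZMod (2 ^ n)) := by
            conv_lhs => rw [show j = (j - 1) + 1 by omega]
            push_cast; ring
          rw [h2j, h2j']
          ring
        · simp only [Prod.snd_add]; simp [b2_add_self]
  refine AddEquiv.ext fun x => ?_
  obtain ⟨c, hc⟩ := key n (by omega) x
  rw [hc, ZMod.natCast_self, zero_mul]
  simp

lemma psi_apply (hn : 1 < n) (f : AddAut (ZMod (2 ^ n) × B2)) (b : B2) :
    psi hn f b = (f (0, b)).2 := rfl

/-- An explicit automorphism of order 3. -/
def sigma3 (n : ℕ) : AddAut (ZMod (2 ^ n) × B2) where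
  toFun x := (x.1, x.2.2, x.2.1 + x.2.2)
  invFun x := (x.1, x.2.1 + x.2.2, x.2.1)
  left_inv x := by
    obtain ⟨a, p, q⟩ := x
    have h : ∀ p q : ZMod 2, q + (p + q) = p := by decide
    simp [Prod.ext_iff, h]
  right_inv x := by
    obtain ⟨a, p, q⟩ := x
    have h : ∀ p q : ZMod 2, p + q + p = q := by decide
    simp [Prod.ext_iff, h]
  map_add' x y := by
    obtain ⟨a, p, q⟩ := x
    obtain ⟨a', p', q'⟩ := y
    have h : ∀ p q p' q' : ZMod 2, p + p' + (q + q') = p + q + (p' + q') := by decide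
    simp [Prod.ext_iff, h]

lemma sigma3_apply (x : ZMod (2 ^ n) × B2) :
    sigma3 n x = (x.1, x.2.2, x.2.1 + x.2.2) := rfl

lemma sigma3_pow_three : (sigma3 n) ^ 3 = 1 := by
  have h3 : (sigma3 n) ^ 3 = sigma3 n * (sigma3 n * sigma3 n) := by
    rw [pow_succ, pow_succ, pow_one, mul_assoc]
  rw [h3]
  refine AddEquiv.ext fun x => ?_
  rw [AddAut.mul_apply, AddAut.mul_apply]
  obtain ⟨a, p, q⟩ := x
  simp only [sigma3_apply]
  have h1 : ∀ p q : ZMod 2, q + (p + q) = p := by decide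
  have h2 : ∀ p q : ZMod 2, p + q + (q + (p + q)) = q := by decide
  have h0 : ∀ p q : ZMod 2, p + q + p = q := by decide
  simp [Prod.ext_iff, h0, h1, h2]

lemma sigma3_ne_one : sigma3 n ≠ 1 := by
  intro h
  have h2 := DFunLike.congr_fun h ((0 : ZMod (2 ^ n)), ((1 : ZMod 2), (0 : ZMod 2)))
  rw [sigma3_apply] at h2
  have h3 := congrArg (fun t => t.2.1) h2
  simp at h3

lemma orderOf_sigma3 : orderOf (sigma3 n) = 3 :=
  orderOf_eq_prime sigma3_pow_three sigma3_ne_one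

end Stmt1Aux

open Stmt1Aux

/-- For `n > 1`, every Sylow 3-subgroup of `Aut(C_{2^n} × C_2 × C_2)` has order 3
(equivalently, the largest odd-order subgroup has order 3), and every odd-order subgroup is
trivial or isomorphic to `C_3`. -/
theorem stmt_1 (n : ℕ) (hn : 1 < n) :
    (∀ S : Sylow 3 (Multiplicative (AddAut (ZMod (2 ^ n) × ZMod 2 × ZMod 2))), Nat.card S = 3) ∧
    (∃ H : Subgroup (Multiplicative (AddAut (ZMod (2 ^ n) × ZMod 2 × ZMod 2))), Nat.card H = 3) ∧
    (∀ H : Subgroup (Multiplicative (AddAut (ZMod (2 ^ n) × ZMod 2 × ZMod 2))), Odd (Nat.card H) →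
      Nat.card H = 1 ∨ Nonempty (H ≃* Multiplicative (ZMod 3))) := by
  haveI : NeZero (2 ^ n) := ⟨pow_ne_zero n two_ne_zero⟩
  haveI : Fact (Nat.Prime 3) := ⟨Nat.prime_three⟩
  -- every odd-order subgroup has cardinality dividing 6
  have hodd : ∀ H : Subgroup (Multiplicative (AddAut (ZMod (2 ^ n) × ZMod 2 × ZMod 2))),
      Odd (Nat.card H) → Nat.card H ∣ 6 := by
    intro H hH
    have hinj : Function.Injective ((psi hn).comp H.subtype) := by
      rw [injective_iff_map_eq_one]
      intro h hh
      have hf : ∀ b : B2, (((h : Multiplicative (AddAut (ZMod (2 ^ n) × B2))) : AddAut (ZMod (2 ^ n) × B2)) (0, b)).2 = b := by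
        intro b
        have h1 := DFunLike.congr_fun hh b
        exact h1
      have hpow : ((h : Multiplicative (AddAut (ZMod (2 ^ n) × B2))) : AddAut (ZMod (2 ^ n) × B2)) ^ (2 ^ n) = 1 :=
        order_two_pow_of_ker hn _ hf
      have hpowH : h ^ (2 ^ n) = 1 := by
        apply Subtype.ext
        rw [SubmonoidClass.coe_pow]
        exact hpow
      have h1 : orderOf h ∣ 2 ^ n := orderOf_dvd_of_pow_eq_one hpowH
      have h2 : orderOf h ∣ Nat.card H := orderOf_dvd_natCard h
      obtain ⟨k, hk, hek⟩ := (Nat.dvd_prime_pow Nat.prime_two).mp h1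
      have hk0 : k = 0 := by
        by_contra hk0
        have : 2 ∣ Nat.card H := dvd_trans ⟨2 ^ (k - 1), by
          rw [show k = 1 + (k - 1) by omega, pow_add, pow_one] at hek
          exact hek⟩ h2
        rw [Nat.odd_iff] at hH
        omega
      rw [hk0, pow_zero] at hek
      exact orderOf_eq_one_iff.mp hek
    have := Subgroup.card_dvd_of_injective ((psi hn).comp H.subtype) hinj
    rwa [card_addAut_B2] at this
  have hcardpos : 0 < Nat.card (Multiplicative (AddAut (ZMod (2 ^ n) × ZMod 2 × ZMod 2))) := Nat.card_pos
  have h3dvd : 3 ∣ Nat.card (Multiplicative (AddAut (ZMod (2 ^ n) × ZMod 2 × ZMod 2))) := by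
    rw [← orderOf_sigma3 (n := n)]
    exact orderOf_dvd_natCard (sigma3 n)
  refine ⟨?_, ⟨Subgroup.zpowers (sigma3 n), ?_⟩, ?_⟩
  · intro S
    have hS := Sylow.card_eq_multiplicity S
    have he1 : 1 ≤ (Nat.card (Multiplicative (AddAut (ZMod (2 ^ n) × ZMod 2 × ZMod 2)))).factorization 3 :=
      Nat.Prime.factorization_pos_of_dvd Nat.prime_three hcardpos.ne' h3dvd
    have hOdd : Odd (Nat.card S) := by
      rw [hS]; exact Odd.pow (by decide)
    have hdvd6 : Nat.card S ∣ 6 := hodd S hOdd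
    rw [hS] at hdvd6 ⊢
    have he : (Nat.card (Multiplicative (AddAut (ZMod (2 ^ n) × ZMod 2 × ZMod 2)))).factorization 3 = 1 := by
      by_contra hne
      have h2 : 2 ≤ (Nat.card (Multiplicative (AddAut (ZMod (2 ^ n) × ZMod 2 × ZMod 2)))).factorization 3 := by
        omega
      have h9 : (9 : ℕ) ∣ 6 :=
        dvd_trans (by calc (9 : ℕ) = 3 ^ 2 := by norm_num
                        _ ∣ 3 ^ _ := pow_dvd_pow 3 h2) hdvd6
      norm_num at h9
    rw [he]; norm_num
  · exact (Nat.card_zpowers _).trans orderOf_sigma3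
  · intro H hH
    have hd := hodd H hH
    have hpos : 0 < Nat.card H := Nat.card_pos
    have hle : Nat.card H ≤ 6 := Nat.le_of_dvd (by norm_num) hd
    have hm2 : Nat.card H % 2 = 1 := Nat.odd_iff.mp hH
    have h13 : Nat.card H = 1 ∨ Nat.card H = 3 := by
      interval_cases h : (Nat.card H) <;> omega
    rcases h13 with h1 | h3
    · exact Or.inl h1
    · refine Or.inr ⟨?_⟩
      haveI : IsCyclic H := isCyclic_of_prime_card (p := 3) h3
      have e := (zmodCyclicMulEquiv (inferInstance : IsCyclic H)).symm
      rw [h3] at e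
      exact e
end

section
/- Let ω be a primitive cube root of unity in a field K of characteristic zero, and let a_1, a_2, a_3, a_4 ∈ K. Then the four conditions a_1+a_2+a_3+3a_4 ∈ O, a_1+a_2+a_3−a_4 ∈ O, a_1+ωa_2+ω²a_3 ∈ O, and a_1+ω²a_2+ωa_3 ∈ O together hold if and only if 4a_i ∈ O for i = 1,2,3,4 and δ_i a_i − δ_j a_j ∈ O for all 1 ≤ i, j ≤ 4, where δ_1 = δ_2 = δ_3 = 1 and δ_4 = −1. -/
private lemma inv3_mem {K : Type*} [Field K] [CharZero K]
    (O : ValuationSubring K) (h2 : ¬ IsUnit (2 : O)) : ((3:K)⁻¹ ∈ O) := by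
  have h3u : IsUnit (3 : O) := by
    by_contra h3
    have h2m : (2:O) ∈ IsLocalRing.maximalIdeal O := h2
    have h3m : (3:O) ∈ IsLocalRing.maximalIdeal O := h3
    have h1m : (1:O) ∈ IsLocalRing.maximalIdeal O := by
      have := Ideal.sub_mem _ h3m h2m
      norm_num at this
    exact (IsLocalRing.maximalIdeal.isMaximal O).ne_top
      (Ideal.eq_top_of_isUnit_mem _ h1m isUnit_one)
  obtain ⟨u, hu⟩ := h3u
  have h1 : ((u⁻¹ : Oˣ) : O) * 3 = 1 := by rw [← hu]; exact u.inv_mul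
  have hK : ((((u⁻¹ : Oˣ) : O) : K)) * 3 = 1 := by
    have := congrArg (fun x : O => (x : K)) h1
    push_cast at this
    exact this
  have he : (3:K)⁻¹ = (((u⁻¹ : Oˣ) : O) : K) := inv_eq_of_mul_eq_one_left hK
  rw [he]; exact SetLike.coe_mem _

/-- description of the lattice `CF(A_4, O A_4, O)`.  With `ω` a primitive cube
root of unity in a valuation ring `O` of residue characteristic 2 inside a characteristic-zero
field `K`, and `a : Fin 4 → K`, the four conditions `a_1+a_2+a_3+3a_4 ∈ O`,
`a_1+a_2+a_3−a_4 ∈ O`, `a_1+ωa_2+ω²a_3 ∈ O`, `a_1+ω²a_2+ωa_3 ∈ O` hold together iff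
`4a_i ∈ O` for all `i` and `δ_i a_i − δ_j a_j ∈ O` for all `i, j`, where
`δ_1 = δ_2 = δ_3 = 1` and `δ_4 = −1`. -/
theorem stmt_5 {K : Type*} [Field K] [CharZero K]
    (O : ValuationSubring K) (h2 : ¬ IsUnit (2 : O))
    (ω : K) (hω : IsPrimitiveRoot ω 3) (hωO : ω ∈ O)
    (a : Fin 4 → K) :
    (a 0 + a 1 + a 2 + 3 * a 3 ∈ O ∧
     a 0 + a 1 + a 2 - a 3 ∈ O ∧
     a 0 + ω * a 1 + ω ^ 2 * a 2 ∈ O ∧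
     a 0 + ω ^ 2 * a 1 + ω * a 2 ∈ O) ↔
    ((∀ i, 4 * a i ∈ O) ∧
     ∀ i j : Fin 4, (if i = 3 then (-1 : K) else 1) * a i
        - (if j = 3 then (-1 : K) else 1) * a j ∈ O) := by
  have mem_of_eq : ∀ {x y : K}, x = y → y ∈ O → x ∈ O := fun h hy => h ▸ hy
  have h3inv : (3:K)⁻¹ ∈ O := inv3_mem O h2
  have h3ne : (3:K) ≠ 0 := by norm_num
  have hc : ω ^ 3 = 1 := hω.pow_eq_one
  have hq : ω ^ 2 + ω + 1 = 0 := by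
    have hne : ω - 1 ≠ 0 := sub_ne_zero.mpr (hω.ne_one (by norm_num))
    have : (ω - 1) * (ω ^ 2 + ω + 1) = 0 := by linear_combination hc
    rcases mul_eq_zero.mp this with h | h
    · exact absurd h hne
    · exact h
  constructor
  · rintro ⟨hc1, hc2, hc3, hc4⟩
    -- 4 a 3 ∈ O
    have h4a3 : 4 * a 3 ∈ O := mem_of_eq
      (y := (a 0 + a 1 + a 2 + 3 * a 3) - (a 0 + a 1 + a 2 - a 3)) (by ring)
      (sub_mem hc1 hc2)
    -- a 1 - a 2 ∈ O
    have h3d12 : 3 * (a 1 - a 2) ∈ O := mem_of_eq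
      (y := (ω * ω - ω) * ((a 0 + ω * a 1 + ω ^ 2 * a 2) - (a 0 + ω ^ 2 * a 1 + ω * a 2)))
      (by linear_combination (a 1 - a 2) * (ω - 2) * hc + (a 1 - a 2) * hq)
      (mul_mem (sub_mem (mul_mem hωO hωO) hωO) (sub_mem hc3 hc4))
    have hd12 : a 1 - a 2 ∈ O := mem_of_eq
      (y := (3:K)⁻¹ * (3 * (a 1 - a 2))) (by field_simp) (mul_mem h3inv h3d12)
    -- a 0 + a 1 - 2 a 2 ∈ O
    have hsum : a 0 + a 1 - 2 * a 2 ∈ O := mem_of_eq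
      (y := -ω * ((a 0 + ω * a 1 + ω ^ 2 * a 2) + ω * (a 0 + ω ^ 2 * a 1 + ω * a 2)))
      (by linear_combination (-(a 1) + 2 * a 2 + a 1 * (1 + ω)) * hc + (a 0 + a 1) * hq)
      (mul_mem (neg_mem hωO) (add_mem hc3 (mul_mem hωO hc4)))
    have hd02 : a 0 - a 2 ∈ O := mem_of_eq
      (y := (a 0 + a 1 - 2 * a 2) - (a 1 - a 2)) (by ring) (sub_mem hsum hd12)
    have hd01 : a 0 - a 1 ∈ O := mem_of_eq
      (y := (a 0 - a 2) - (a 1 - a 2)) (by ring) (sub_mem hd02 hd12)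
    -- a 0 + a 3 ∈ O
    have hs03 : a 0 + a 3 ∈ O := mem_of_eq
      (y := (3:K)⁻¹ * ((a 0 + a 1 + a 2 - a 3) + (a 0 - a 1) + (a 0 - a 2) + 4 * a 3))
      (by field_simp; ring)
      (mul_mem h3inv (add_mem (add_mem (add_mem hc2 hd01) hd02) h4a3))
    have hs13 : a 1 + a 3 ∈ O := mem_of_eq
      (y := (a 0 + a 3) - (a 0 - a 1)) (by ring) (sub_mem hs03 hd01)
    have hs23 : a 2 + a 3 ∈ O := mem_of_eq
      (y := (a 0 + a 3) - (a 0 - a 2)) (by ring) (sub_mem hs03 hd02)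
    have h4O : (4:K) ∈ O := by
      have := natCast_mem O 4
      norm_num at this
      exact_mod_cast natCast_mem O 4
    have h4a0 : 4 * a 0 ∈ O := mem_of_eq
      (y := 4 * (a 0 + a 3) - 4 * a 3) (by ring)
      (sub_mem (mul_mem h4O hs03) h4a3)
    have h4a1 : 4 * a 1 ∈ O := mem_of_eq
      (y := 4 * (a 1 + a 3) - 4 * a 3) (by ring)
      (sub_mem (mul_mem h4O hs13) h4a3)
    have h4a2 : 4 * a 2 ∈ O := mem_of_eq
      (y := 4 * (a 2 + a 3) - 4 * a 3) (by ring)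
      (sub_mem (mul_mem h4O hs23) h4a3)
    refine ⟨fun i => ?_, fun i j => ?_⟩
    · fin_cases i
      exacts [h4a0, h4a1, h4a2, h4a3]
    · fin_cases i <;> fin_cases j <;>
        norm_num [Fin.ext_iff, show ((3:Fin 4)).val = 3 from rfl,
          show ((⟨2, by omega⟩:Fin 4)) = 2 from rfl, show ((⟨3, by omega⟩:Fin 4)) = 3 from rfl] <;>
        first
        | (refine mem_of_eq (y := (0:K)) ?_ (zero_mem _); ring1)
        | exact hd01
        | exact hd02
        | exact hd12
        | (refine mem_of_eq (y := -(a 0 - a 1)) ?_ (neg_mem hd01); ring1)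
        | (refine mem_of_eq (y := -(a 0 - a 2)) ?_ (neg_mem hd02); ring1)
        | (refine mem_of_eq (y := -(a 1 - a 2)) ?_ (neg_mem hd12); ring1)
        | exact hs03
        | exact hs13
        | exact hs23
        | (refine mem_of_eq (y := -(a 0 + a 3)) ?_ (neg_mem hs03); ring1)
        | (refine mem_of_eq (y := -(a 1 + a 3)) ?_ (neg_mem hs13); ring1)
        | (refine mem_of_eq (y := -(a 2 + a 3)) ?_ (neg_mem hs23); ring1)
  · rintro ⟨h4, hd⟩
    have hs03 : a 0 + a 3 ∈ O := by have := hd 0 3; norm_num at this; exact this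
    have hs13 : a 1 + a 3 ∈ O := by have := hd 1 3; norm_num at this; exact this
    have hs23 : a 2 + a 3 ∈ O := by have := hd 2 3; norm_num at this; exact this
    have hd01 : a 0 - a 1 ∈ O := by have := hd 0 1; norm_num at this; exact this
    have hd02 : a 0 - a 2 ∈ O := by have := hd 0 2; norm_num at this; exact this
    have hd12 : a 1 - a 2 ∈ O := by have := hd 1 2; norm_num at this; exact this
    have h4a3 := h4 3
    refine ⟨?_, ?_, ?_, ?_⟩
    · exact mem_of_eq (y := (a 0 + a 3) + ((a 1 + a 3) + (a 2 + a 3))) (by ring)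
        (add_mem hs03 (add_mem hs13 hs23))
    · exact mem_of_eq (y := ((a 0 + a 3) + ((a 1 + a 3) + (a 2 + a 3))) - 4 * a 3) (by ring)
        (sub_mem (add_mem hs03 (add_mem hs13 hs23)) h4a3)
    · exact mem_of_eq (y := (a 0 - a 2) + ω * (a 1 - a 2))
        (by linear_combination a 2 * hq) (add_mem hd02 (mul_mem hωO hd12))
    · exact mem_of_eq (y := (a 0 - a 1) + ω * (a 2 - a 1))
        (by linear_combination a 1 * hq)
        (add_mem hd01 (mul_mem hωO (mem_of_eq (y := -(a 1 - a 2)) (by ring) (neg_mem hd12))))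
end

section
/- Let ζ be a primitive 2^n-th root of unity in a field K of characteristic 0 with valuation ring O of residue characteristic 2, and suppose j_1, j_2, j_3, j_4 ∈ Z satisfy: ζ^{j_1}+ζ^{j_2}+ζ^{j_3}+ζ^{j_4} ∈ 4O, ζ^{j_1}+ωζ^{j_2}+ω²ζ^{j_3} ∈ 4O, and ζ^{j_1}+ω²ζ^{j_2}+ωζ^{j_3} ∈ 4O, where ω is a primitive cube root of unity in O. Then ζ^{j_1} = ζ^{j_2} = ζ^{j_3} = ζ^{j_4}. -/
/-- Any root of unity in `K` lies in any valuation subring of `K`. -/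
lemma root_mem' {K : Type*} [Field K] (O : ValuationSubring K) (x : K) (N : ℕ)
    (hN : 0 < N) (hx : x ^ N = 1) : x ∈ O := by
  rcases O.mem_or_inv_mem x with h | h
  · exact h
  · have hxinv : (x⁻¹) ^ N = 1 := by rw [inv_pow, hx, inv_one]
    have h1 : x⁻¹ * (x⁻¹) ^ (N - 1) = 1 := by
      rw [← pow_succ', Nat.sub_add_cancel hN]
      exact hxinv
    have h2 : x = (x⁻¹) ^ (N - 1) := by
      have := inv_eq_of_mul_eq_one_right h1
      rwa [inv_inv] at this
    rw [h2]; exact pow_mem h _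

/-- Key lemma: a `2^n`-th root of unity congruent to `1` mod `4O` equals `1`,
when `2` is not a unit of `O`. -/
lemma key_lemma {K : Type*} [Field K] [CharZero K] (O : ValuationSubring K)
    (h2 : ¬ IsUnit (2 : O)) (n : ℕ) (η : K) (hη : η ^ (2 ^ n) = 1)
    (h : ∃ t : K, t ∈ O ∧ 1 - η = 4 * t) : η = 1 := by
  classical
  by_contra hne
  obtain ⟨t, htO, ht⟩ := h
  have hηO : η ∈ O := root_mem' O η (2 ^ n) (by positivity) hη
  have hP : ∃ k, η ^ (2 ^ k) = 1 := ⟨n, hη⟩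
  have hm1 : η ^ (2 ^ Nat.find hP) = 1 := Nat.find_spec hP
  have hmpos : 0 < Nat.find hP := by
    rcases Nat.eq_zero_or_pos (Nat.find hP) with h0 | hp
    · rw [h0, pow_zero, pow_one] at hm1; exact absurd hm1 hne
    · exact hp
  set m := Nat.find hP with hmdef
  set N := 2 ^ (m - 1) with hNdef
  have hsq : (η ^ N) * (η ^ N) = 1 := by
    rw [← pow_add]
    have hNN : N + N = 2 ^ m := by
      rw [hNdef, ← two_mul, ← pow_succ', Nat.sub_add_cancel hmpos]
    rw [hNN]; exact hm1
  have hne1 : η ^ N ≠ 1 := by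
    have := Nat.find_min hP (show m - 1 < m from Nat.pred_lt hmpos.ne')
    simpa [hNdef] using this
  have hθ : η ^ N = -1 := (mul_self_eq_one_iff.mp hsq).resolve_left hne1
  have hgeom : (∑ i ∈ Finset.range N, η ^ i) * (η - 1) = η ^ N - 1 := geom_sum_mul η N
  have hsO : (∑ i ∈ Finset.range N, η ^ i) * t ∈ O :=
    mul_mem (sum_mem fun i _ => pow_mem hηO i) htO
  have h2eq : (2 : K) = 4 * ((∑ i ∈ Finset.range N, η ^ i) * t) := by
    linear_combination hgeom + hθ + (∑ i ∈ Finset.range N, η ^ i) * ht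
  have hs2 : (2 : K) * ((∑ i ∈ Finset.range N, η ^ i) * t) = 1 := by
    have h4 : (2 : K) * ((2 : K) * ((∑ i ∈ Finset.range N, η ^ i) * t)) = 2 * 1 := by
      linear_combination -h2eq
    exact mul_left_cancel₀ (two_ne_zero) h4
  apply h2
  refine IsUnit.of_mul_eq_one (a := 2) ⟨_, hsO⟩ ?_
  apply Subtype.ext
  push_cast
  exact hs2

/-- with `ζ` a primitive `2^n`-th root of unity and `ω` a primitive cube root of
unity in the valuation ring `O` (of residue characteristic 2) of a characteristic-zero field
`K`, if `ζ^{j₁}+ζ^{j₂}+ζ^{j₃}+ζ^{j₄} ∈ 4O`, `ζ^{j₁}+ωζ^{j₂}+ω²ζ^{j₃} ∈ 4O` and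
`ζ^{j₁}+ω²ζ^{j₂}+ωζ^{j₃} ∈ 4O`, then `ζ^{j₁} = ζ^{j₂} = ζ^{j₃} = ζ^{j₄}`. -/
theorem stmt_6 (n : ℕ) (hn : 0 < n) {K : Type*} [Field K] [CharZero K]
    (O : ValuationSubring K) (h2 : ¬ IsUnit (2 : O))
    (ζ : K) (hζ : IsPrimitiveRoot ζ (2 ^ n))
    (ω : K) (hω : IsPrimitiveRoot ω 3) (hωO : ω ∈ O)
    (j₁ j₂ j₃ j₄ : ℤ)
    (h1 : ∃ y : K, y ∈ O ∧ ζ ^ j₁ + ζ ^ j₂ + ζ ^ j₃ + ζ ^ j₄ = 4 * y)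
    (h2' : ∃ y : K, y ∈ O ∧ ζ ^ j₁ + ω * ζ ^ j₂ + ω ^ 2 * ζ ^ j₃ = 4 * y)
    (h3 : ∃ y : K, y ∈ O ∧ ζ ^ j₁ + ω ^ 2 * ζ ^ j₂ + ω * ζ ^ j₃ = 4 * y) :
    ζ ^ j₁ = ζ ^ j₂ ∧ ζ ^ j₂ = ζ ^ j₃ ∧ ζ ^ j₃ = ζ ^ j₄ := by
  obtain ⟨y1, hy1O, hy1⟩ := h1
  obtain ⟨y2, hy2O, hy2⟩ := h2'
  obtain ⟨y3, hy3O, hy3⟩ := h3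
  have hz1 : ζ ^ (2 ^ n) = 1 := hζ.pow_eq_one
  have hzne : ζ ≠ 0 := hζ.ne_zero (by positivity)
  have key_pow : ∀ j : ℤ, (ζ ^ j) ^ (2 ^ n) = 1 := by
    intro j
    rw [← zpow_natCast (ζ ^ j), ← zpow_mul, mul_comm, zpow_mul, zpow_natCast, hz1, one_zpow]
  have memO : ∀ j : ℤ, ζ ^ j ∈ O := fun j => root_mem' O _ _ (by positivity) (key_pow j)
  -- facts about ω
  have hω3 : ω ^ 3 = 1 := hω.pow_eq_one
  have hωne1 : ω ≠ 1 := hω.ne_one (by norm_num)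
  have hωs : ω ^ 2 + ω + 1 = 0 := by
    have h0 : (ω - 1) * (ω ^ 2 + ω + 1) = 0 := by linear_combination hω3
    rcases mul_eq_zero.mp h0 with h | h
    · exact absurd (sub_eq_zero.mp h) hωne1
    · exact h
  -- 3 is a unit in O
  have u3 : IsUnit (3 : O) := by
    have hone : IsUnit ((3 : O) + (-2)) := by norm_num
    rcases IsLocalRing.isUnit_or_isUnit_of_isUnit_add hone with h | h
    · exact h
    · exact absurd (by simpa using h.neg) h2
  obtain ⟨c, hcO, hc3⟩ : ∃ c : K, c ∈ O ∧ (3 : K) * c = 1 := by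
    obtain ⟨u, hu⟩ := u3
    refine ⟨(((u⁻¹ : Oˣ) : O) : K), SetLike.coe_mem _, ?_⟩
    have hmu : (u : O) * ((u⁻¹ : Oˣ) : O) = 1 := u.mul_inv
    rw [hu] at hmu
    have := congrArg (fun z : O => (z : K)) hmu
    push_cast at this
    exact this
  -- generic step: difference in 4O forces equality of the two roots of unity
  have main : ∀ ja jb : ℤ, ∀ t : K, t ∈ O → ζ ^ ja - ζ ^ jb = 4 * t → ζ ^ ja = ζ ^ jb := by
    intro ja jb t ht heq
    have e1 : ζ ^ jb * ζ ^ (-ja) = ζ ^ (jb - ja) := by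
      rw [← zpow_add₀ hzne, sub_eq_add_neg]
    have e2 : ζ ^ ja * ζ ^ (-ja) = 1 := by
      rw [← zpow_add₀ hzne]
      simp
    have heq' : 1 - ζ ^ (jb - ja) = 4 * (t * ζ ^ (-ja)) := by
      linear_combination ζ ^ (-ja) * heq - e2 + e1
    have hη : ζ ^ (jb - ja) = 1 :=
      key_lemma O h2 n _ (key_pow _) ⟨_, mul_mem ht (memO _), heq'⟩
    have e3 : ζ ^ ja * ζ ^ (jb - ja) = ζ ^ jb := by
      rw [← zpow_add₀ hzne]
      congr 1
      ring
    rw [hη, mul_one] at e3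
    exact e3
  -- differences are in 4O
  have d12 : ζ ^ j₁ - ζ ^ j₂ = 4 * (c * ((1 - ω ^ 2) * y2 + (1 - ω) * y3)) := by
    linear_combination (c * (1 - ω ^ 2)) * hy2 + (c * (1 - ω)) * hy3 +
      (-c * (-(ζ ^ j₁) + (3 - 2 * ω) * ζ ^ j₂ + (ω - ω ^ 2) * ζ ^ j₃)) * hωs +
      (-(ζ ^ j₁ - ζ ^ j₂)) * hc3
  have d13 : ζ ^ j₁ - ζ ^ j₃ = 4 * (c * ((1 - ω) * y2 + (1 - ω ^ 2) * y3)) := by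
    linear_combination (c * (1 - ω)) * hy2 + (c * (1 - ω ^ 2)) * hy3 +
      (-c * (-(ζ ^ j₁) + (ω - ω ^ 2) * ζ ^ j₂ + (3 - 2 * ω) * ζ ^ j₃)) * hωs +
      (-(ζ ^ j₁ - ζ ^ j₃)) * hc3
  have h12 : ζ ^ j₁ = ζ ^ j₂ :=
    main j₁ j₂ _ (mul_mem hcO (add_mem (mul_mem (sub_mem (one_mem O) (pow_mem hωO 2))
      hy2O) (mul_mem (sub_mem (one_mem O) hωO) hy3O))) d12
  have h13 : ζ ^ j₁ = ζ ^ j₃ :=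
    main j₁ j₃ _ (mul_mem hcO (add_mem (mul_mem (sub_mem (one_mem O) hωO) hy2O)
      (mul_mem (sub_mem (one_mem O) (pow_mem hωO 2)) hy3O))) d13
  have d41 : ζ ^ j₄ - ζ ^ j₁ = 4 * (y1 - ζ ^ j₁) := by
    linear_combination hy1 + h12 + h13
  have h41 : ζ ^ j₄ = ζ ^ j₁ := main j₄ j₁ _ (sub_mem hy1O (memO j₁)) d41
  exact ⟨h12, h12.symm.trans h13, h13.symm.trans h41.symm⟩
end

section
/- The group of isometries of the lattice Z Irr(A_4) (with the standard inner product in which the four irreducible characters χ_1, χ_2, χ_3, χ_4 of A_4 form an orthonormal basis) that preserve the sublattice Z prj(A_4) spanned by χ_1+χ_4, χ_2+χ_4, χ_3+χ_4 is precisely the set of maps sending each χ_j to ε δ_j δ_{σ(j)} χ_{σ(j)}, for σ ∈ S_4 and ε ∈ {±1}, where δ_1 = δ_2 = δ_3 = 1 and δ_4 = −1; this group is isomorphic to C_2 × S_4. -/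
def dlt (i : Fin 4) : ℤ := if i = 3 then -1 else 1

lemma dlt_pm (i : Fin 4) : dlt i = 1 ∨ dlt i = -1 := by unfold dlt; split <;> simp

lemma dlt_sq (i : Fin 4) : dlt i * dlt i = 1 := by rcases dlt_pm i with h | h <;> rw [h] <;> ring

lemma ucoe_sq (u : ℤˣ) : (u : ℤ) * (u : ℤ) = 1 := by
  rw [← Units.val_mul, Int.units_mul_self]
  rfl

lemma smul_single (c : ℤ) (p : Fin 4) :
    c • (Pi.single p 1 : Fin 4 → ℤ) = Pi.single p c := by
  funext x
  simp [Pi.single_apply, mul_ite]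

lemma single_delta (p : Fin 4) (x : ℤ) :
    (Pi.single p x : Fin 4 → ℤ) 0 + (Pi.single p x : Fin 4 → ℤ) 1 +
      (Pi.single p x : Fin 4 → ℤ) 2 - (Pi.single p x : Fin 4 → ℤ) 3 = dlt p * x := by
  fin_cases p <;> simp [dlt, Pi.single_apply]

lemma sum_single_mul (p q : Fin 4) (x y : ℤ) :
    ∑ r, (Pi.single p x : Fin 4 → ℤ) r * (Pi.single q y : Fin 4 → ℤ) r =
      if p = q then x * y else 0 := by
  fin_cases p <;> fin_cases q <;> simp [Pi.single_apply, Fin.sum_univ_four]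

lemma eval_basis (f : (Fin 4 → ℤ) →ₗ[ℤ] (Fin 4 → ℤ)) (a : Fin 4 → ℤ) :
    f a = ∑ j, a j • f (Pi.single j 1) := by
  conv_lhs => rw [← Finset.univ_sum_single a]
  rw [map_sum]
  congr 1
  funext j
  rw [← map_smul]
  congr 1
  funext x
  simp [Pi.single_apply]

lemma abs_le_one_of (x : ℤ) (h : x * x ≤ 1) : x = -1 ∨ x = 0 ∨ x = 1 := by
  have h1 : -1 ≤ x := by nlinarith
  have h2 : x ≤ 1 := by nlinarith
  omega

lemma norm_one_classify (v : Fin 4 → ℤ) (h : ∑ i, v i * v i = 1) :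
    ∃ (i : Fin 4) (s : ℤ), (s = 1 ∨ s = -1) ∧ v = Pi.single i s := by
  rw [Fin.sum_univ_four] at h
  have h0 := abs_le_one_of (v 0) (by nlinarith [mul_self_nonneg (v 1), mul_self_nonneg (v 2), mul_self_nonneg (v 3)])
  have h1 := abs_le_one_of (v 1) (by nlinarith [mul_self_nonneg (v 0), mul_self_nonneg (v 2), mul_self_nonneg (v 3)])
  have h2 := abs_le_one_of (v 2) (by nlinarith [mul_self_nonneg (v 0), mul_self_nonneg (v 1), mul_self_nonneg (v 3)])
  have h3 := abs_le_one_of (v 3) (by nlinarith [mul_self_nonneg (v 0), mul_self_nonneg (v 1), mul_self_nonneg (v 2)])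
  rcases h0 with h0 | h0 | h0 <;> rcases h1 with h1 | h1 | h1 <;>
    rcases h2 with h2 | h2 | h2 <;> rcases h3 with h3 | h3 | h3 <;>
    rw [h0, h1, h2, h3] at h <;>
    first
    | (exfalso; omega)
    | (refine ⟨0, 1, Or.inl rfl, funext fun x => ?_⟩; fin_cases x <;> simp [Pi.single_apply, h0, h1, h2, h3]; done)
    | (refine ⟨0, -1, Or.inr rfl, funext fun x => ?_⟩; fin_cases x <;> simp [Pi.single_apply, h0, h1, h2, h3]; done)
    | (refine ⟨1, 1, Or.inl rfl, funext fun x => ?_⟩; fin_cases x <;> simp [Pi.single_apply, h0, h1, h2, h3]; done)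
    | (refine ⟨1, -1, Or.inr rfl, funext fun x => ?_⟩; fin_cases x <;> simp [Pi.single_apply, h0, h1, h2, h3]; done)
    | (refine ⟨2, 1, Or.inl rfl, funext fun x => ?_⟩; fin_cases x <;> simp [Pi.single_apply, h0, h1, h2, h3]; done)
    | (refine ⟨2, -1, Or.inr rfl, funext fun x => ?_⟩; fin_cases x <;> simp [Pi.single_apply, h0, h1, h2, h3]; done)
    | (refine ⟨3, 1, Or.inl rfl, funext fun x => ?_⟩; fin_cases x <;> simp [Pi.single_apply, h0, h1, h2, h3]; done)
    | (refine ⟨3, -1, Or.inr rfl, funext fun x => ?_⟩; fin_cases x <;> simp [Pi.single_apply, h0, h1, h2, h3]; done)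

def Fmap (σ : Equiv.Perm (Fin 4)) (u : ℤ) : (Fin 4 → ℤ) →ₗ[ℤ] (Fin 4 → ℤ) where
  toFun a i := u * dlt i * dlt (σ⁻¹ i) * a (σ⁻¹ i)
  map_add' a b := funext fun i => by simp; ring
  map_smul' c a := funext fun i => by simp; ring

lemma Fmap_apply (σ : Equiv.Perm (Fin 4)) (u : ℤ) (a : Fin 4 → ℤ) (i : Fin 4) :
    Fmap σ u a i = u * dlt i * dlt (σ⁻¹ i) * a (σ⁻¹ i) := rfl

lemma Fmap_comp (σ τ : Equiv.Perm (Fin 4)) (u v : ℤ) :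
    (Fmap σ u).comp (Fmap τ v) = Fmap (σ * τ) (u * v) := by
  refine LinearMap.ext fun a => funext fun i => ?_
  show u * dlt i * dlt (σ⁻¹ i) * (Fmap τ v a (σ⁻¹ i)) = _
  rw [Fmap_apply, Fmap_apply]
  rw [mul_inv_rev, Equiv.Perm.mul_apply]
  linear_combination (u * v * dlt i * dlt (τ⁻¹ (σ⁻¹ i)) * a (τ⁻¹ (σ⁻¹ i))) * dlt_sq (σ⁻¹ i)

lemma Fmap_id : Fmap 1 1 = LinearMap.id := by
  refine LinearMap.ext fun a => funext fun i => ?_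
  rw [Fmap_apply]
  simp only [inv_one, Equiv.Perm.one_apply, LinearMap.id_apply]
  linear_combination a i * dlt_sq i

lemma Fmap_single (σ : Equiv.Perm (Fin 4)) (u : ℤ) (j : Fin 4) :
    Fmap σ u (Pi.single j 1) = Pi.single (σ j) (u * dlt j * dlt (σ j)) := by
  funext i
  rw [Fmap_apply, Pi.single_apply, Pi.single_apply]
  by_cases h : i = σ j
  · have h' : σ⁻¹ i = j := by rw [h]; exact σ.symm_apply_apply j
    rw [if_pos h, if_pos h', h', h]
    ring
  · have h' : ¬ σ⁻¹ i = j := fun hc => h (by rw [← hc]; exact (σ.apply_symm_apply i).symm)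
    rw [if_neg h, if_neg h']
    ring

def Fequiv (σ : Equiv.Perm (Fin 4)) (u : ℤˣ) : (Fin 4 → ℤ) ≃ₗ[ℤ] (Fin 4 → ℤ) :=
  LinearEquiv.ofLinear (Fmap σ (u : ℤ)) (Fmap σ⁻¹ (u : ℤ))
    (by rw [Fmap_comp, mul_inv_cancel, ucoe_sq, Fmap_id])
    (by rw [Fmap_comp, inv_mul_cancel, ucoe_sq, Fmap_id])

lemma Fequiv_apply (σ : Equiv.Perm (Fin 4)) (u : ℤˣ) (a : Fin 4 → ℤ) (i : Fin 4) :
    Fequiv σ u a i = (u : ℤ) * dlt i * dlt (σ⁻¹ i) * a (σ⁻¹ i) := rfl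

lemma Fequiv_single (σ : Equiv.Perm (Fin 4)) (u : ℤˣ) (j : Fin 4) :
    Fequiv σ u (Pi.single j 1) = Pi.single (σ j) ((u : ℤ) * dlt j * dlt (σ j)) :=
  Fmap_single σ (u : ℤ) j

lemma perm_inv_eq_symm (σ : Equiv.Perm (Fin 4)) : (σ⁻¹ : Equiv.Perm (Fin 4)) = σ.symm := rfl

lemma Fequiv_cond1 (σ : Equiv.Perm (Fin 4)) (u : ℤˣ) (a b : Fin 4 → ℤ) :
    ∑ i, Fequiv σ u a i * Fequiv σ u b i = ∑ i, a i * b i := by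
  have : ∀ i : Fin 4, Fequiv σ u a i * Fequiv σ u b i = a (σ.symm i) * b (σ.symm i) := by
    intro i
    rw [Fequiv_apply, Fequiv_apply, perm_inv_eq_symm]
    linear_combination (dlt i * dlt i * dlt (σ.symm i) * dlt (σ.symm i) * a (σ.symm i) *
        b (σ.symm i)) * ucoe_sq u +
      (dlt (σ.symm i) * dlt (σ.symm i) * a (σ.symm i) * b (σ.symm i)) * dlt_sq i +
      (a (σ.symm i) * b (σ.symm i)) * dlt_sq (σ.symm i)
  rw [Finset.sum_congr rfl fun i _ => this i]
  exact Equiv.sum_comp σ.symm fun j => a j * b j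

lemma Fequiv_cond2 (σ : Equiv.Perm (Fin 4)) (u : ℤˣ) (a : Fin 4 → ℤ)
    (ha : a 0 + a 1 + a 2 = a 3) :
    Fequiv σ u a 0 + Fequiv σ u a 1 + Fequiv σ u a 2 = Fequiv σ u a 3 := by
  have key : ∑ i, dlt i * Fequiv σ u a i = (u : ℤ) * ∑ j, dlt j * a j := by
    rw [show ∑ j, dlt j * a j = ∑ j, dlt (σ.symm j) * a (σ.symm j) from
      (Equiv.sum_comp σ.symm fun j => dlt j * a j).symm]
    rw [Finset.mul_sum]
    refine Finset.sum_congr rfl fun i _ => ?_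
    rw [Fequiv_apply, perm_inv_eq_symm]
    linear_combination ((u:ℤ) * dlt (σ.symm i) * a (σ.symm i)) * dlt_sq i
  rw [Fin.sum_univ_four, Fin.sum_univ_four] at key
  have d0 : dlt 0 = 1 := rfl
  have d1 : dlt 1 = 1 := rfl
  have d2 : dlt 2 = 1 := rfl
  have d3 : dlt 3 = -1 := rfl
  rw [d0, d1, d2, d3] at key
  have hz : 1 * a 0 + 1 * a 1 + 1 * a 2 + -1 * a 3 = 0 := by linarith
  rw [hz, mul_zero] at key
  linarith

lemma forward (f : (Fin 4 → ℤ) ≃ₗ[ℤ] (Fin 4 → ℤ))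
    (h1 : ∀ a b : Fin 4 → ℤ, ∑ i, f a i * f b i = ∑ i, a i * b i)
    (h2 : ∀ a : Fin 4 → ℤ, a 0 + a 1 + a 2 = a 3 → f a 0 + f a 1 + f a 2 = f a 3) :
    ∃ (σ : Equiv.Perm (Fin 4)) (ε : ℤ), (ε = 1 ∨ ε = -1) ∧
      ∀ j : Fin 4, f (Pi.single j 1) = (ε * dlt j * dlt (σ j)) • Pi.single (σ j) (1 : ℤ) := by
  have hcl : ∀ j : Fin 4, ∃ (i : Fin 4) (s : ℤ), (s = 1 ∨ s = -1) ∧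
      f (Pi.single j 1) = Pi.single i s := by
    intro j
    refine norm_one_classify _ ?_
    rw [h1, sum_single_mul]
    simp
  choose idx s hs hv using hcl
  -- injectivity of idx
  have hinj : Function.Injective idx := by
    intro j k hjk
    by_contra hne
    have := h1 (Pi.single j 1) (Pi.single k 1)
    rw [hv j, hv k, sum_single_mul, sum_single_mul, if_pos hjk, if_neg hne] at this
    rcases hs j with hj | hj <;> rcases hs k with hk | hk <;> rw [hj, hk] at this <;>
      norm_num at this
  have hbij : Function.Bijective idx := Finite.injective_iff_bijective.mp hinj
  let σ : Equiv.Perm (Fin 4) := Equiv.ofBijective idx hbij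
  have hσ : ∀ j, σ j = idx j := fun j => rfl
  -- sign equations
  have smul_single' : ∀ (c d : ℤ) (p : Fin 4),
      c • (Pi.single p d : Fin 4 → ℤ) = Pi.single p (c * d) := by
    intro c d p
    funext x
    simp [Pi.single_apply, mul_ite]
  have fsingle : ∀ (p : Fin 4) (x : ℤ), f (Pi.single p x) = Pi.single (idx p) (x * s p) := by
    intro p x
    rw [← smul_single x p, map_smul, hv p, smul_single']
  have sign_eq : ∀ (p q : Fin 4) (x y : ℤ), dlt p * x + dlt q * y = 0 →
      dlt (idx p) * (x * s p) + dlt (idx q) * (y * s q) = 0 := by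
    intro p q x y hpq
    have ha : (Pi.single p x + Pi.single q y : Fin 4 → ℤ) 0 +
        (Pi.single p x + Pi.single q y : Fin 4 → ℤ) 1 +
        (Pi.single p x + Pi.single q y : Fin 4 → ℤ) 2 =
        (Pi.single p x + Pi.single q y : Fin 4 → ℤ) 3 := by
      simp only [Pi.add_apply]
      have dp := single_delta p x
      have dq := single_delta q y
      linarith
    have h := h2 _ ha
    rw [map_add, fsingle p x, fsingle q y] at h
    simp only [Pi.add_apply] at h
    have dp := single_delta (idx p) (x * s p)
    have dq := single_delta (idx q) (y * s q)
    linarith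
  have trel : ∀ j : Fin 4, dlt (idx 0) * (dlt 0 * s 0) + dlt (idx j) * (-dlt j * s j) = 0 :=
    fun j => sign_eq 0 j (dlt 0) (-dlt j) (by linear_combination dlt_sq (0 : Fin 4) - dlt_sq j)
  refine ⟨σ, dlt (idx 0) * s 0, ?_, ?_⟩
  · rcases dlt_pm (idx 0) with h | h <;> rcases hs 0 with h' | h' <;> rw [h, h'] <;> norm_num
  · intro j
    rw [hv j, hσ j, smul_single]
    refine congrArg (Pi.single (idx j)) ?_
    have trelj := trel j
    rw [show dlt (0 : Fin 4) = 1 from rfl] at trelj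
    rcases dlt_pm j with hj | hj <;> rcases dlt_pm (idx j) with hij | hij <;>
      rw [hj, hij] at trelj ⊢ <;> nlinarith [trelj]

def sgn (g : Multiplicative (ZMod 2)) : ℤˣ := if g = 1 then 1 else -1

lemma sgn_mul (g h : Multiplicative (ZMod 2)) : sgn (g * h) = sgn g * sgn h := by revert g h; decide

lemma sgn_inj : Function.Injective sgn := by decide

lemma sgn_surj (ε : ℤ) (hε : ε = 1 ∨ ε = -1) : ∃ g, ((sgn g : ℤˣ) : ℤ) = ε := by
  rcases hε with h | h
  · exact ⟨1, by rw [h]; rfl⟩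
  · exact ⟨Multiplicative.ofAdd 1, by rw [h]; rfl⟩

lemma coeff_ne (u : ℤˣ) (j k : Fin 4) : (u : ℤ) * dlt j * dlt k ≠ 0 := by
  rcases dlt_pm j with hj | hj <;> rcases dlt_pm k with hk | hk <;>
    rcases Int.units_eq_one_or u with hu | hu <;> simp [hj, hk, hu]

lemma single_eq_single {p q : Fin 4} {x y : ℤ} (hx : x ≠ 0)
    (h : (Pi.single p x : Fin 4 → ℤ) = Pi.single q y) : p = q ∧ x = y := by
  have h1 := congrFun h p
  rw [Pi.single_eq_same, Pi.single_apply] at h1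
  by_cases hpq : p = q
  · subst hpq
    rw [if_pos rfl] at h1
    exact ⟨rfl, h1⟩
  · rw [if_neg hpq] at h1
    exact absurd h1 hx

def eHom : Multiplicative (ZMod 2) × Equiv.Perm (Fin 4) →* ((Fin 4 → ℤ) ≃ₗ[ℤ] (Fin 4 → ℤ)) where
  toFun p := Fequiv p.2 (sgn p.1)
  map_one' := by
    refine LinearEquiv.ext fun a => funext fun i => ?_
    show ((sgn 1 : ℤˣ) : ℤ) * dlt i * dlt ((1 : Equiv.Perm (Fin 4))⁻¹ i) *
        a ((1 : Equiv.Perm (Fin 4))⁻¹ i) = a i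
    have h1 : ((1 : Equiv.Perm (Fin 4))⁻¹ : Equiv.Perm (Fin 4)) i = i := rfl
    have h2 : ((sgn 1 : ℤˣ) : ℤ) = 1 := rfl
    rw [h1, h2]
    linear_combination a i * dlt_sq i
  map_mul' p q := by
    refine LinearEquiv.ext fun a => funext fun i => ?_
    show Fequiv (p.2 * q.2) (sgn (p.1 * q.1)) a i
      = Fequiv p.2 (sgn p.1) (Fequiv q.2 (sgn q.1) a) i
    rw [Fequiv_apply, Fequiv_apply, Fequiv_apply, sgn_mul, mul_inv_rev, Equiv.Perm.mul_apply,
      Units.val_mul]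
    linear_combination (-(((sgn p.1 : ℤˣ) : ℤ) * ((sgn q.1 : ℤˣ) : ℤ) * dlt i *
      dlt (q.2⁻¹ (p.2⁻¹ i)) * a (q.2⁻¹ (p.2⁻¹ i)))) * dlt_sq (p.2⁻¹ i)

lemma eHom_inj : Function.Injective eHom := by
  rintro ⟨g, σ⟩ ⟨g', σ'⟩ hgg
  have hF : Fequiv σ (sgn g) = Fequiv σ' (sgn g') := hgg
  have hj : ∀ j : Fin 4, (Pi.single (σ j) (((sgn g : ℤˣ) : ℤ) * dlt j * dlt (σ j)) : Fin 4 → ℤ)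
      = Pi.single (σ' j) (((sgn g' : ℤˣ) : ℤ) * dlt j * dlt (σ' j)) := by
    intro j
    have e1 : Fequiv σ (sgn g) (Pi.single j 1) = Fequiv σ' (sgn g') (Pi.single j 1) := by
      rw [hF]
    rw [Fequiv_single, Fequiv_single] at e1
    exact e1
  have hσ : σ = σ' := Equiv.ext fun j => (single_eq_single (coeff_ne _ j (σ j)) (hj j)).1
  have hc := (single_eq_single (coeff_ne (sgn g) 0 (σ 0)) (hj 0)).2
  rw [← hσ] at hc
  have hgeq : sgn g = sgn g' := by
    apply Units.ext
    rcases dlt_pm (σ 0) with h | h <;> rw [h] at hc <;>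
      have d0 : dlt 0 = 1 := rfl <;> rw [d0] at hc <;> linarith
  exact Prod.ext (sgn_inj hgeq) hσ

lemma eq_Fequiv (f : (Fin 4 → ℤ) ≃ₗ[ℤ] (Fin 4 → ℤ)) (σ : Equiv.Perm (Fin 4)) (ε : ℤ)
    (hε : ε = 1 ∨ ε = -1)
    (hj : ∀ j : Fin 4, f (Pi.single j 1) = (ε * dlt j * dlt (σ j)) • Pi.single (σ j) (1 : ℤ)) :
    ∃ g : Multiplicative (ZMod 2), f = Fequiv σ (sgn g) := by
  obtain ⟨g, hg⟩ := sgn_surj ε hε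
  refine ⟨g, LinearEquiv.ext fun a => ?_⟩
  have key : ∀ j : Fin 4, f (Pi.single j 1) = (Fequiv σ (sgn g)) (Pi.single j 1) := by
    intro j
    rw [Fequiv_single, hj j, smul_single, hg]
  have E1 := eval_basis (f : (Fin 4 → ℤ) →ₗ[ℤ] (Fin 4 → ℤ)) a
  have E2 := eval_basis ((Fequiv σ (sgn g)) : (Fin 4 → ℤ) →ₗ[ℤ] (Fin 4 → ℤ)) a
  simp only [LinearEquiv.coe_coe] at E1 E2
  rw [E1, E2]
  exact Finset.sum_congr rfl fun j _ => by rw [key j]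

/-- identifying `ℤIrr(A_4)` with `ℤ^4` via the orthonormal basis
`χ_1, χ_2, χ_3, χ_4`, the isometries of `ℤIrr(A_4)` preserving the sublattice
`ℤprj(A_4) = {a : a_1+a_2+a_3 = a_4}` (spanned by `χ_1+χ_4, χ_2+χ_4, χ_3+χ_4`) are exactly the
maps `χ_j ↦ ε δ_j δ_{σ(j)} χ_{σ(j)}` for `σ ∈ S_4`, `ε ∈ {±1}`, with
`δ_1 = δ_2 = δ_3 = 1 = -δ_4`; and this group of isometries is isomorphic to `C_2 × S_4`
(expressed here via an injective monoid homomorphism from `C_2 × S_4` with image exactly the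
set of such isometries). -/
theorem stmt_11 :
    (∀ f : (Fin 4 → ℤ) ≃ₗ[ℤ] (Fin 4 → ℤ),
      ((∀ a b : Fin 4 → ℤ, ∑ i, f a i * f b i = ∑ i, a i * b i) ∧
        (∀ a : Fin 4 → ℤ, a 0 + a 1 + a 2 = a 3 → f a 0 + f a 1 + f a 2 = f a 3)) ↔
      ∃ (σ : Equiv.Perm (Fin 4)) (ε : ℤ), (ε = 1 ∨ ε = -1) ∧
        ∀ j : Fin 4, f (Pi.single j 1) =
          (ε * (if j = 3 then (-1 : ℤ) else 1) * (if σ j = 3 then (-1 : ℤ) else 1)) •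
            Pi.single (σ j) (1 : ℤ)) ∧
    ∃ e : Multiplicative (ZMod 2) × Equiv.Perm (Fin 4) →* ((Fin 4 → ℤ) ≃ₗ[ℤ] (Fin 4 → ℤ)),
      Function.Injective e ∧
      Set.range e = {f : (Fin 4 → ℤ) ≃ₗ[ℤ] (Fin 4 → ℤ) |
        (∀ a b : Fin 4 → ℤ, ∑ i, f a i * f b i = ∑ i, a i * b i) ∧
        (∀ a : Fin 4 → ℤ, a 0 + a 1 + a 2 = a 3 → f a 0 + f a 1 + f a 2 = f a 3)} := by
  constructor
  · intro f
    constructor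
    · rintro ⟨hc1, hc2⟩
      exact forward f hc1 hc2
    · rintro ⟨σ, ε, hε, hj⟩
      obtain ⟨g, rfl⟩ := eq_Fequiv f σ ε hε hj
      exact ⟨Fequiv_cond1 σ (sgn g), Fequiv_cond2 σ (sgn g)⟩
  · refine ⟨eHom, eHom_inj, ?_⟩
    ext f
    simp only [Set.mem_range, Set.mem_setOf_eq]
    constructor
    · rintro ⟨⟨g, σ⟩, rfl⟩
      exact ⟨Fequiv_cond1 σ (sgn g), Fequiv_cond2 σ (sgn g)⟩
    · rintro ⟨hc1, hc2⟩
      obtain ⟨σ, ε, hε, hj⟩ := forward f hc1 hc2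
      obtain ⟨g, rfl⟩ := eq_Fequiv f σ ε hε hj
      exact ⟨(g, σ), rfl⟩
end

section
/- Let ζ be a primitive 2^n-th root of unity in a characteristic-zero field and let α = ∑_{i=0}^{2^m−1} ζ^{l_i} be a sum of 2^m powers of ζ. Then the product over all σ in Gal(Q(ζ)/Q) of σ(α) is a rational integer, and its absolute value (under any complex embedding) is at most 2^{m·[Q(ζ):Q]}, with equality if and only if all ζ^{l_i} are equal. -/
open Finset Complex

private lemma unit_sum_eq_card {N : ℕ} (z : Fin N → ℂ) (h1 : ∀ i, ‖z i‖ = 1)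
    (h : ‖∑ i, z i‖ = N) : ∀ i j, z i = z j := by
  have hz0 : ∀ i, z i ≠ 0 := fun i hi => by have := h1 i; rw [hi] at this; simp at this
  have habs : ∀ i j, ‖z i * (starRingEnd ℂ) (z j)‖ = 1 := by
    intro i j; rw [norm_mul, Complex.norm_conj, h1, h1, one_mul]
  have hre_le : ∀ i j, (z i * (starRingEnd ℂ) (z j)).re ≤ 1 := by
    intro i j
    calc (z i * (starRingEnd ℂ) (z j)).re ≤ ‖z i * (starRingEnd ℂ) (z j)‖ :=
          Complex.re_le_norm _
      _ = 1 := habs i j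
  have hsum : ∑ p : Fin N × Fin N, (z p.1 * (starRingEnd ℂ) (z p.2)).re = (N : ℝ) ^ 2 := by
    have h1' : ((∑ i, z i) * (starRingEnd ℂ) (∑ i, z i)) =
        ∑ p : Fin N × Fin N, z p.1 * (starRingEnd ℂ) (z p.2) := by
      rw [map_sum, Finset.sum_mul_sum, ← Finset.sum_product']
      rfl
    have h2' : Complex.normSq (∑ i, z i) = (N : ℝ) ^ 2 := by
      rw [← Complex.sq_norm, h]
    have := congrArg Complex.re h1'
    rw [Complex.mul_conj] at this
    rw [← h2', ← Complex.ofReal_re (Complex.normSq (∑ i, z i)), this, Complex.re_sum]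
  have hkey : ∀ i j, (z i * (starRingEnd ℂ) (z j)).re = 1 := by
    have heq : ∑ p : Fin N × Fin N, (z p.1 * (starRingEnd ℂ) (z p.2)).re =
        ∑ _p : Fin N × Fin N, (1 : ℝ) := by
      rw [hsum, Finset.sum_const, Finset.card_univ, Fintype.card_prod, Fintype.card_fin]
      push_cast; ring
    have := (Finset.sum_eq_sum_iff_of_le (fun p _ => hre_le p.1 p.2)).mp heq
    exact fun i j => this (i, j) (Finset.mem_univ _)
  intro i j
  have him : (z i * (starRingEnd ℂ) (z j)).im = 0 := by
    have hns : Complex.normSq (z i * (starRingEnd ℂ) (z j)) = 1 := by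
      rw [← Complex.sq_norm, habs i j, one_pow]
    rw [Complex.normSq_apply, hkey i j] at hns
    nlinarith [sq_nonneg (z i * (starRingEnd ℂ) (z j)).im]
  have hone : z i * (starRingEnd ℂ) (z j) = 1 := by
    apply Complex.ext
    · rw [hkey i j]; rfl
    · rw [him]; rfl
  have hjj : z j * (starRingEnd ℂ) (z j) = 1 := by
    rw [Complex.mul_conj, ← Complex.sq_norm, h1 j]; norm_num
  have : z i * (starRingEnd ℂ) (z j) = z j * (starRingEnd ℂ) (z j) := by rw [hone, hjj]
  exact mul_right_cancel₀ (by simpa using hz0 j) this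

/-- Let `K = ℚ(ζ)` be the `2^n`-th cyclotomic field and
`α = ∑_{i<2^m} ζ^{l_i}` a sum of `2^m` powers of a primitive `2^n`-th root of unity `ζ`.
Then the product of `σ(α)` over all `σ ∈ Gal(K/ℚ)` is a rational integer, and under any
complex embedding of `K` its absolute value is at most `2^{m·[K:ℚ]}`, with equality iff all
the `ζ^{l_i}` are equal. -/
theorem stmt_17 (n m : ℕ) (hn : 0 < n) (hm : 0 < m)
    (K : Type*) [Field K] [CharZero K] [Algebra ℚ K] [FiniteDimensional ℚ K]
    [IsCyclotomicExtension {(2 : ℕ) ^ n} ℚ K]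
    (ζ : K) (hζ : IsPrimitiveRoot ζ (2 ^ n))
    (l : Fin (2 ^ m) → ℤ) :
    (∃ z : ℤ, ∏ᶠ σ : K ≃ₐ[ℚ] K, σ (∑ i, ζ ^ (l i)) = (z : K)) ∧
    ∀ φ : K →+* ℂ,
      ‖φ (∏ᶠ σ : K ≃ₐ[ℚ] K, σ (∑ i, ζ ^ (l i)))‖ ≤
        2 ^ (m * Module.finrank ℚ K) ∧
      (‖φ (∏ᶠ σ : K ≃ₐ[ℚ] K, σ (∑ i, ζ ^ (l i)))‖ =
          2 ^ (m * Module.finrank ℚ K) ↔ ∀ i j, ζ ^ (l i) = ζ ^ (l j)) := by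
  haveI := IsCyclotomicExtension.isGalois ({(2 : ℕ) ^ n} : Set ℕ) ℚ K
  set α : K := ∑ i, ζ ^ (l i) with hα
  have hfin : (∏ᶠ σ : K ≃ₐ[ℚ] K, σ α) = ∏ σ : K ≃ₐ[ℚ] K, σ α := finprod_eq_prod_of_fintype _
  have hnorm : algebraMap ℚ K (Algebra.norm ℚ α) = ∏ σ : K ≃ₐ[ℚ] K, σ α :=
    Algebra.norm_eq_prod_automorphisms ℚ α
  -- integrality
  have hζpow : ∀ i : Fin (2 ^ m), (ζ ^ (l i)) ^ (2 ^ n) = 1 := by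
    intro i
    rw [← zpow_natCast, ← zpow_mul, mul_comm, zpow_mul, zpow_natCast, hζ.pow_eq_one, one_zpow]
  have hζint : ∀ i : Fin (2 ^ m), IsIntegral ℤ (ζ ^ (l i)) := by
    intro i
    refine ⟨Polynomial.X ^ (2 ^ n) - 1, ?_, ?_⟩
    · simpa using Polynomial.monic_X_pow_sub_C (1 : ℤ) (by positivity)
    · simp [hζpow i]
  have hαint : IsIntegral ℤ α := IsIntegral.sum _ fun i _ => hζint i
  have hnormint : IsIntegral ℤ (Algebra.norm ℚ α) := Algebra.isIntegral_norm (K := ℚ) hαint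
  obtain ⟨z, hz⟩ := IsIntegrallyClosed.isIntegral_iff.mp hnormint
  constructor
  · exact ⟨z, by rw [hfin, ← hnorm, ← hz]; push_cast; simp⟩
  intro φ
  set w : (K ≃ₐ[ℚ] K) → ℂ := fun σ => φ (σ ζ) with hwdef
  have hw1 : ∀ σ, ‖w σ‖ = 1 := by
    intro σ
    refine Complex.norm_eq_one_of_pow_eq_one (n := 2 ^ n) ?_ (by positivity)
    rw [← map_pow, ← map_pow, hζ.pow_eq_one, map_one, map_one]
  have hφσ : ∀ σ : K ≃ₐ[ℚ] K, φ (σ α) = ∑ i, (w σ) ^ (l i) := by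
    intro σ
    rw [hα, map_sum, map_sum]
    exact Finset.sum_congr rfl fun i _ => by rw [map_zpow₀, map_zpow₀]
  have habs_w : ∀ σ (i : Fin (2 ^ m)), ‖(w σ) ^ (l i)‖ = 1 := by
    intro σ i; rw [norm_zpow, hw1, one_zpow]
  have habs_each : ∀ σ : K ≃ₐ[ℚ] K, ‖φ (σ α)‖ ≤ 2 ^ m := by
    intro σ
    rw [hφσ]
    calc ‖∑ i, (w σ) ^ (l i)‖ ≤ ∑ i, ‖(w σ) ^ (l i)‖ :=
          norm_sum_le _ _
      _ = ∑ _i : Fin (2 ^ m), (1 : ℝ) := by simp [habs_w σ]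
      _ = 2 ^ m := by simp
  have hcard : Fintype.card (K ≃ₐ[ℚ] K) = Module.finrank ℚ K := by
    rw [← Nat.card_eq_fintype_card]; exact IsGalois.card_aut_eq_finrank ℚ K
  have hφprod : ‖φ (∏ᶠ σ : K ≃ₐ[ℚ] K, σ α)‖ =
      ∏ σ : K ≃ₐ[ℚ] K, ‖φ (σ α)‖ := by
    rw [hfin, map_prod, norm_prod]
  have h2 : (2 : ℝ) ^ (m * Module.finrank ℚ K) = ∏ _σ : K ≃ₐ[ℚ] K, ((2 : ℝ) ^ m) := by
    rw [Finset.prod_const, Finset.card_univ, hcard, ← pow_mul]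
  have hle : ‖φ (∏ᶠ σ : K ≃ₐ[ℚ] K, σ α)‖ ≤ 2 ^ (m * Module.finrank ℚ K) := by
    rw [hφprod, h2]
    exact Finset.prod_le_prod (fun σ _ => norm_nonneg _) fun σ _ => habs_each σ
  refine ⟨hle, ?_, ?_⟩
  · -- equality → all equal
    intro heq
    have hpos : (0 : ℝ) < 2 ^ (m * Module.finrank ℚ K) := by positivity
    have hne : ∀ σ : K ≃ₐ[ℚ] K, ‖φ (σ α)‖ ≠ 0 := by
      rw [hφprod] at heq
      intro σ hσ
      rw [Finset.prod_eq_zero (Finset.mem_univ σ) hσ] at heq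
      exact hpos.ne heq
    have hid : ‖φ α‖ = 2 ^ m := by
      by_contra hc
      have hlt : ‖φ ((AlgEquiv.refl : K ≃ₐ[ℚ] K) α)‖ < 2 ^ m :=
        lt_of_le_of_ne (habs_each _) (by simpa using hc)
      have : ∏ σ : K ≃ₐ[ℚ] K, ‖φ (σ α)‖ <
          ∏ _σ : K ≃ₐ[ℚ] K, ((2 : ℝ) ^ m) :=
        Finset.prod_lt_prod (fun σ _ => (hne σ).symm.lt_of_le (norm_nonneg _))
          (fun σ _ => habs_each σ) ⟨AlgEquiv.refl, Finset.mem_univ _, hlt⟩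
      rw [← hφprod, ← h2, heq] at this
      exact lt_irrefl _ this
    have hαid : φ ((AlgEquiv.refl : K ≃ₐ[ℚ] K) α) = ∑ i, (w AlgEquiv.refl) ^ (l i) :=
      hφσ AlgEquiv.refl
    simp only [AlgEquiv.coe_refl, id_eq] at hαid
    have hkey := unit_sum_eq_card (fun i => (w AlgEquiv.refl) ^ (l i))
      (fun i => habs_w AlgEquiv.refl i)
      (by rw [← hαid, hid]; push_cast; ring)
    intro i j
    apply φ.injective
    rw [map_zpow₀, map_zpow₀]
    exact hkey i j
  · -- all equal → equality
    intro hall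
    have i0 : Fin (2 ^ m) := ⟨0, by positivity⟩
    have hαeq : α = (2 ^ m : ℕ) * ζ ^ (l i0) := by
      rw [hα, Finset.sum_congr rfl fun i _ => hall i i0, Finset.sum_const, Finset.card_univ,
        Fintype.card_fin, nsmul_eq_mul]
    have heach : ∀ σ : K ≃ₐ[ℚ] K, ‖φ (σ α)‖ = 2 ^ m := by
      intro σ
      rw [hαeq, map_mul, map_mul, map_natCast, map_natCast, norm_mul, Complex.norm_natCast,
        map_zpow₀ σ, map_zpow₀ φ, habs_w σ i0]
      push_cast; ring
    rw [hφprod, Finset.prod_congr rfl fun σ _ => heach σ, ← h2]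
end

section
/- Let P be a p-subgroup of a direct product of finite groups H = H_1 × ⋯ × H_t. If P is a radical p-subgroup of H (i.e., P = O_p(N_H(P))), then P = P_1 × ⋯ × P_t where P_i = P ∩ H_i, and each P_i is a radical p-subgroup of H_i. -/
/-- The `p`-core `O_p(G)`: the largest normal `p`-subgroup of `G` (the join of all normal
`p`-subgroups). -/
def pCore (p : ℕ) (G : Type*) [Group G] : Subgroup G :=
  sSup {Q : Subgroup G | Q.Normal ∧ IsPGroup p Q}

/-- `P` is a radical `p`-subgroup of `G`: a `p`-subgroup with `P = O_p(N_G(P))`. -/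
def IsRadicalPSubgroup (p : ℕ) {G : Type*} [Group G] (P : Subgroup G) : Prop :=
  IsPGroup p P ∧ Subgroup.map (Subgroup.normalizer (P : Set G)).subtype (pCore p ↥(Subgroup.normalizer (P : Set G))) = P

theorem sSup_normal {G : Type*} [Group G] {S : Set (Subgroup G)}
    (hS : ∀ Q ∈ S, Q.Normal) : (sSup S).Normal := by
  constructor
  intro n hn g
  have h : sSup S ≤ (sSup S).comap ((MulAut.conj g).toMonoidHom) := by
    refine sSup_le fun Q hQ => le_trans ?_ (Subgroup.comap_mono (le_sSup hQ))
    intro x hx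
    simpa using (hS Q hQ).conj_mem x hx g
  simpa using h hn

theorem pCore_normal {p : ℕ} {G : Type*} [Group G] : (pCore p G).Normal :=
  sSup_normal fun _ hQ => hQ.1

theorem isPGroup_pCore {p : ℕ} {G : Type*} [Group G] [Finite G] :
    IsPGroup p (pCore p G) := by
  have hS : ∀ Q ∈ {Q : Subgroup G | Q.Normal ∧ IsPGroup p Q}, Q.Normal ∧ IsPGroup p Q :=
    fun _ h => h
  refine Set.Finite.induction_on_subset
    (motive := fun (s : Set (Subgroup G)) _ => IsPGroup p ↥(sSup s)) _ (Set.toFinite _) ?_ ?_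
  · show IsPGroup p ↥(sSup (∅ : Set (Subgroup G)))
    rw [sSup_empty]; exact IsPGroup.of_bot
  · intro a s haS hsS _ ih
    show IsPGroup p ↥(sSup (insert a s))
    rw [sSup_insert]
    haveI : (sSup s).Normal := sSup_normal fun Q hQ => (hS Q (hsS hQ)).1
    exact IsPGroup.to_sup_of_normal_right (hS a haS).2 ih

theorem aux_le_map_pCore {p : ℕ} {G : Type*} [Group G] {N K : Subgroup G}
    (hKN : K ≤ N) (hK : IsPGroup p K)
    (hstab : ∀ n ∈ N, ∀ x ∈ K, n * x * n⁻¹ ∈ K) :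
    K ≤ (pCore p ↥N).map N.subtype := by
  have h1 : (K.subgroupOf N).Normal := by
    constructor
    intro x hx g
    rw [Subgroup.mem_subgroupOf] at hx ⊢
    simpa using hstab g g.2 x hx
  have h3 : K.subgroupOf N ≤ pCore p ↥N := le_sSup ⟨h1, hK.comap_subtype⟩
  have h4 := Subgroup.map_mono (f := N.subtype) h3
  rwa [Subgroup.subgroupOf_map_subtype, inf_of_le_left hKN] at h4

theorem aux_pCore_map_stab {p : ℕ} {G : Type*} [Group G] (N : Subgroup G) :
    ∀ n ∈ N, ∀ x ∈ (pCore p ↥N).map N.subtype, n * x * n⁻¹ ∈ (pCore p ↥N).map N.subtype := by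
  intro n hn x hx
  obtain ⟨y, hy, rfl⟩ := hx
  exact ⟨⟨n, hn⟩ * y * ⟨n, hn⟩⁻¹, pCore_normal.conj_mem y hy ⟨n, hn⟩, by simp⟩

theorem isPGroup_pi {p t : ℕ} {H : Fin t → Type*} [∀ i, Group (H i)]
    (f : ∀ i, Subgroup (H i)) (hf : ∀ i, IsPGroup p (f i)) :
    IsPGroup p (Subgroup.pi Set.univ f) := by
  intro g
  have h : ∀ i, ∃ k, (g.1 i) ^ p ^ k = 1 := by
    intro i
    obtain ⟨k, hk⟩ := hf i ⟨g.1 i, (Subgroup.mem_pi _).1 g.2 i (Set.mem_univ i)⟩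
    exact ⟨k, by simpa using congrArg Subtype.val hk⟩
  choose k hk using h
  refine ⟨Finset.univ.sup k, ?_⟩
  refine Subtype.ext ?_
  rw [SubmonoidClass.coe_pow]
  show (g : ∀ i, H i) ^ p ^ Finset.univ.sup k = 1
  funext i
  have hle : k i ≤ Finset.univ.sup k := Finset.le_sup (Finset.mem_univ i)
  show (g.1 i) ^ p ^ Finset.univ.sup k = (1 : H i)
  rw [← Nat.add_sub_cancel' hle, pow_add, pow_mul, hk i, one_pow]

/-- Olsson–Uno: a radical `p`-subgroup `P` of a direct product
`H = H_1 × ⋯ × H_t` of finite groups decomposes as `P = P_1 × ⋯ × P_t` with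
`P_i = P ∩ H_i`, and each `P_i` is a radical `p`-subgroup of `H_i`. -/
theorem stmt_19 (p : ℕ) (hp : p.Prime) (t : ℕ)
    (H : Fin t → Type*) [∀ i, Group (H i)] [∀ i, Finite (H i)]
    (P : Subgroup (∀ i, H i)) (hrad : IsRadicalPSubgroup p P) :
    P = Subgroup.pi Set.univ (fun i => Subgroup.comap (MonoidHom.mulSingle H i) P) ∧
    ∀ i, IsRadicalPSubgroup p (Subgroup.comap (MonoidHom.mulSingle H i) P) := by
  classical
  obtain ⟨hPp, hPcore⟩ := hrad
  haveI : Fact p.Prime := ⟨hp⟩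
  have hR1 : ∀ K : Subgroup (∀ i, H i), K ≤ (Subgroup.normalizer (P : Set (∀ i, H i))) → IsPGroup p K →
      (∀ n ∈ (Subgroup.normalizer (P : Set (∀ i, H i))), ∀ x ∈ K, n * x * n⁻¹ ∈ K) → K ≤ P :=
    fun K h1 h2 h3 => hPcore ▸ aux_le_map_pCore h1 h2 h3
  set Q : Subgroup (∀ i, H i) :=
    Subgroup.pi Set.univ (fun i => P.map (Pi.evalMonoidHom H i)) with hQdef
  have hPQ : P ≤ Q := fun x hx => (Subgroup.mem_pi _).2 fun i _ => ⟨x, hx, rfl⟩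
  have hQp : IsPGroup p Q := isPGroup_pi _ fun i => hPp.map _
  have hconjP : ∀ g ∈ (Subgroup.normalizer (P : Set (∀ i, H i))), ∀ y ∈ P, g * y * g⁻¹ ∈ P :=
    fun g hg y hy => (Subgroup.mem_normalizer_iff.1 hg y).1 hy
  have hNQ : ∀ g ∈ (Subgroup.normalizer (P : Set (∀ i, H i))), ∀ x ∈ Q, g * x * g⁻¹ ∈ Q := by
    intro g hg x hx
    refine (Subgroup.mem_pi _).2 fun i _ => ?_
    obtain ⟨y, hy, hyx⟩ := (Subgroup.mem_pi _).1 hx i (Set.mem_univ i)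
    refine ⟨g * y * g⁻¹, hconjP g hg y hy, ?_⟩
    simp only [Pi.evalMonoidHom, MonoidHom.coe_mk, OneHom.coe_mk, Function.eval] at hyx ⊢
    simp [hyx]
  have hQNP : Q ⊓ (Subgroup.normalizer (P : Set (∀ i, H i))) ≤ P := by
    refine hR1 _ inf_le_right hQp.to_inf_left ?_
    intro n hn x hx
    rw [Subgroup.mem_inf] at hx ⊢
    exact ⟨hNQ n hn x hx.1, Subgroup.mul_mem _ (Subgroup.mul_mem _ hn hx.2)
      (Subgroup.inv_mem _ hn)⟩
  have hQP : Q ≤ P := by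
    have hnc : NormalizerCondition ↥Q :=
      normalizerCondition_of_isNilpotent (h := hQp.isNilpotent)
    have htop : P.subgroupOf Q = ⊤ := by
      by_contra hne
      obtain ⟨q, hqn, hqp⟩ := SetLike.exists_of_lt (hnc _ (lt_top_iff_ne_top.2 hne))
      refine hqp ?_
      have hqN : (q : ∀ i, H i) ∈ (Subgroup.normalizer (P : Set (∀ i, H i))) := by
        rw [Subgroup.mem_normalizer_iff]
        intro h
        constructor
        · intro hh
          have h1 : (⟨h, hPQ hh⟩ : Q) ∈ P.subgroupOf Q := Subgroup.mem_subgroupOf.2 hh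
          have h2 := (Subgroup.mem_normalizer_iff.1 hqn _).1 h1
          simpa [Subgroup.mem_subgroupOf] using h2
        · intro hh
          have hhQ : h ∈ Q := by
            have h1 : (q : ∀ i, H i) * h * (q : ∀ i, H i)⁻¹ ∈ Q := hPQ hh
            have h2 := Q.mul_mem (Q.mul_mem (Q.inv_mem q.2) h1) q.2
            rwa [show (q : ∀ i, H i)⁻¹ * ((q : ∀ i, H i) * h * (q : ∀ i, H i)⁻¹) *
              (q : ∀ i, H i) = h by group] at h2
          have h1 : q * ⟨h, hhQ⟩ * q⁻¹ ∈ P.subgroupOf Q := by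
            rw [Subgroup.mem_subgroupOf]; simpa using hh
          have h2 := (Subgroup.mem_normalizer_iff.1 hqn _).2 h1
          exact Subgroup.mem_subgroupOf.1 h2
      have hqP : (q : ∀ i, H i) ∈ P := hQNP (Subgroup.mem_inf.2 ⟨q.2, hqN⟩)
      exact Subgroup.mem_subgroupOf.2 hqP
    intro x hx
    have hx2 : (⟨x, hx⟩ : Q) ∈ P.subgroupOf Q := htop ▸ Subgroup.mem_top _
    exact Subgroup.mem_subgroupOf.1 hx2
  have hPeqQ : P = Q := le_antisymm hPQ hQP
  have hcm : ∀ i, P.comap (MonoidHom.mulSingle H i) = P.map (Pi.evalMonoidHom H i) := by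
    intro i
    ext x
    constructor
    · intro hx
      exact ⟨MonoidHom.mulSingle H i x, Subgroup.mem_comap.1 hx,
        by simp [Pi.evalMonoidHom, Function.eval]⟩
    · rintro ⟨y, hy, rfl⟩
      rw [Subgroup.mem_comap, hPeqQ]
      refine (Subgroup.mem_pi _).2 fun j _ => ?_
      by_cases hji : j = i
      · subst hji
        exact ⟨y, hy, by simp [Pi.evalMonoidHom, Function.eval]⟩
      · refine ⟨1, P.one_mem, ?_⟩
        simp [Pi.evalMonoidHom, Function.eval, MonoidHom.mulSingle_apply,
          Pi.mulSingle_eq_of_ne hji]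
  have hpart1 : P = Subgroup.pi Set.univ (fun i => P.comap (MonoidHom.mulSingle H i)) := by
    simp only [hcm]; exact hPeqQ
  have hprojN : ∀ g ∈ (Subgroup.normalizer (P : Set (∀ i, H i))), ∀ j,
      g j ∈ (Subgroup.normalizer ((P.comap (MonoidHom.mulSingle H j)) : Set (H j))) := by
    have key : ∀ j, ∀ g ∈ (Subgroup.normalizer (P : Set (∀ i, H i))), ∀ x ∈ P.comap (MonoidHom.mulSingle H j),
        g j * x * (g j)⁻¹ ∈ P.comap (MonoidHom.mulSingle H j) := by
      intro j g hg x hx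
      rw [hcm j] at hx ⊢
      obtain ⟨y, hy, rfl⟩ := hx
      exact ⟨g * y * g⁻¹, hconjP g hg y hy,
        by simp [Pi.evalMonoidHom, Function.eval]⟩
    intro g hg j
    rw [Subgroup.mem_normalizer_iff]
    intro x
    constructor
    · exact fun hx => key j g hg x hx
    · intro hx
      have h2 := key j g⁻¹ (Subgroup.inv_mem _ hg) _ hx
      rwa [show (g⁻¹ : ∀ i, H i) j * (g j * x * (g j)⁻¹) * ((g⁻¹ : ∀ i, H i) j)⁻¹ = x by
        rw [Pi.inv_apply]; group] at h2
  have hNeq : (Subgroup.normalizer (P : Set (∀ i, H i)))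
      = Subgroup.pi Set.univ (fun j => (Subgroup.normalizer ((P.comap (MonoidHom.mulSingle H j)) : Set (H j)))) := by
    ext g
    constructor
    · intro hg
      exact (Subgroup.mem_pi _).2 fun j _ => hprojN g hg j
    · intro hg
      rw [Subgroup.mem_normalizer_iff]
      intro x
      rw [hpart1]
      rw [Subgroup.mem_pi, Subgroup.mem_pi]
      constructor
      · intro hx j hj
        have h1 := (Subgroup.mem_normalizer_iff.1
          ((Subgroup.mem_pi _).1 hg j (Set.mem_univ j)) (x j)).1 (hx j (Set.mem_univ j))
        simpa using h1
      · intro hx j hj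
        have h1 := hx j (Set.mem_univ j)
        have h2 := (Subgroup.mem_normalizer_iff.1
          ((Subgroup.mem_pi _).1 hg j (Set.mem_univ j)) (x j)).2
        apply h2
        simpa using h1
  refine ⟨hpart1, fun i => ?_⟩
  constructor
  · refine hPp.comap_of_injective _ fun x y hxy => ?_
    have h := congrFun hxy i
    simpa using h
  · refine le_antisymm ?_ ?_
    · -- K_i ≤ P_i
      intro x hx
      rw [Subgroup.mem_comap]
      have hQQ : Subgroup.pi Set.univ (fun j =>
          (pCore p ↥((Subgroup.normalizer ((P.comap (MonoidHom.mulSingle H j)) : Set (H j))))).map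
            ((Subgroup.normalizer ((P.comap (MonoidHom.mulSingle H j)) : Set (H j)))).subtype) ≤ P := by
        refine hR1 _ ?_ (isPGroup_pi _ fun j => isPGroup_pCore.map _) ?_
        · rw [hNeq]
          exact fun y hy => (Subgroup.mem_pi _).2 fun j _ =>
            Subgroup.map_subtype_le _ ((Subgroup.mem_pi _).1 hy j (Set.mem_univ j))
        · intro n hn y hy
          refine (Subgroup.mem_pi _).2 fun j _ => ?_
          have h1 := aux_pCore_map_stab (p := p) _ (n j) (hprojN n hn j) (y j)
            ((Subgroup.mem_pi _).1 hy j (Set.mem_univ j))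
          simpa using h1
      apply hQQ
      refine (Subgroup.mem_pi _).2 fun j _ => ?_
      by_cases hji : j = i
      · subst hji
        simpa using hx
      · rw [MonoidHom.mulSingle_apply, Pi.mulSingle_eq_of_ne hji]
        exact Subgroup.one_mem _
    · -- P_i ≤ K_i
      refine aux_le_map_pCore Subgroup.le_normalizer ?_ ?_
      · refine hPp.comap_of_injective _ fun x y hxy => ?_
        have h := congrFun hxy i
        simpa using h
      · exact fun n hn x hx => (Subgroup.mem_normalizer_iff.1 hn x).1 hx
end
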